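/- arXiv:0904.0715 — 5 statements merged into one kernel-verified Lean document; each statement's English description precedes it below -/
import Mathlib

section
/- Let β > 0 and let (I_x)_{x∈ℤ} be real interaction parameters satisfying the symmetry condition I_n = I_{−n+1} for all n ∈ ℤ. Then for every n ∈ ℕ the partition functions satisfy Z_n^+ = (1/2)·( ∏_{i=0}^{n} (1 + e^{−β I_{i+1}})^2 + ∏_{i=0}^{n} (1 − e^{−β I_{i+1}})^2 ) and Z_n^± = (1/2)·( ∏_{i=0}^{n} (1 + e^{−β I_{i+1}})^2 − ∏_{i=0}^{n} (1 − e^{−β I_{i+1}})^2 ). -/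
open Finset

/-- Spin configurations on the box `[-n, n] ⊆ ℤ`, encoded as boolean functions
(`true` ↔ spin `+1`, `false` ↔ spin `-1`). -/
abbrev Config (n : ℕ) := {x // x ∈ Finset.Icc (-(n : ℤ)) (n : ℤ)} → Bool

/-- The spin value `±1` of the configuration `σ` at the site `x` (value `1` off the box). -/
noncomputable def spin {n : ℕ} (σ : Config n) (x : ℤ) : ℝ :=
  if h : x ∈ Finset.Icc (-(n : ℤ)) (n : ℤ) then (if σ ⟨x, h⟩ then 1 else -1) else 1

/-- The Hamiltonian `H_n^+` with plus boundary condition on both sides. -/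
noncomputable def Hplus (I : ℤ → ℝ) (n : ℕ) (σ : Config n) : ℝ :=
  (∑ x ∈ Finset.Icc (-(n : ℤ) + 1) (n : ℤ),
      I x * (if spin σ (x - 1) ≠ spin σ x then 1 else 0))
    + I (-(n : ℤ)) * (if spin σ (-(n : ℤ)) ≠ 1 then 1 else 0)
    + I ((n : ℤ) + 1) * (if spin σ (n : ℤ) ≠ 1 then 1 else 0)

/-- The Hamiltonian `H_n^±` (minus boundary on the left, plus on the right). -/
noncomputable def Hpm (I : ℤ → ℝ) (n : ℕ) (σ : Config n) : ℝ :=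
  Hplus I n σ + I (-(n : ℤ)) * spin σ (-(n : ℤ))

/-- The partition function `Z_n^+`. -/
noncomputable def Zplus (β : ℝ) (I : ℤ → ℝ) (n : ℕ) : ℝ :=
  ∑ σ : Config n, Real.exp (-β * Hplus I n σ)

/-- The partition function `Z_n^±`. -/
noncomputable def Zpm (β : ℝ) (I : ℤ → ℝ) (n : ℕ) : ℝ :=
  ∑ σ : Config n, Real.exp (-β * Hpm I n σ)

namespace IsingAux

noncomputable def sb {n : ℕ} (σ : Config n) (x : ℤ) : Bool :=
  if h : x ∈ Finset.Icc (-(n : ℤ)) (n : ℤ) then σ ⟨x, h⟩ else true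

noncomputable def eps {n : ℕ} (σ : Config n) (x : ℤ) : Bool := sb σ (x - 1) != sb σ x

noncomputable def χ (b : Bool) : ℝ := if b then 1 else -1
noncomputable def η (b : Bool) : ℝ := if b then -1 else 1

lemma sb_off {n : ℕ} (σ : Config n) {x : ℤ} (hx : x ∉ Finset.Icc (-(n : ℤ)) (n : ℤ)) :
    sb σ x = true := dif_neg hx

lemma η_eps {n : ℕ} (σ : Config n) (x : ℤ) :
    η (eps σ x) = χ (sb σ (x - 1)) * χ (sb σ x) := by
  unfold eps η χ
  cases sb σ (x - 1) <;> cases sb σ x <;> norm_num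

lemma chi_sq (b : Bool) : χ b * χ b = 1 := by cases b <;> norm_num [χ]

lemma spin_eq {n : ℕ} (σ : Config n) (x : ℤ) : spin σ x = χ (sb σ x) := by
  unfold spin sb χ
  split <;> simp

lemma spin_ne_iff {n : ℕ} (σ : Config n) (a b : ℤ) :
    spin σ a ≠ spin σ b ↔ (sb σ a != sb σ b) = true := by
  rw [spin_eq, spin_eq]
  cases sb σ a <;> cases sb σ b <;> norm_num [χ]

lemma tele {n : ℕ} (σ : Config n) (a b : ℤ) (hab : a ≤ b) :
    ∏ x ∈ Finset.Icc a b, (χ (sb σ (x - 1)) * χ (sb σ x))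
      = χ (sb σ (a - 1)) * χ (sb σ b) := by
  refine Int.le_induction (motive := fun b _ => ∏ x ∈ Finset.Icc a b, (χ (sb σ (x - 1)) * χ (sb σ x)) = χ (sb σ (a - 1)) * χ (sb σ b)) ?_ ?_ b hab
  · rw [Finset.Icc_self, Finset.prod_singleton]
  · intro b hb ih
    have hins : Finset.Icc a (b + 1) = insert (b + 1) (Finset.Icc a b) := by
      ext y; simp only [Finset.mem_Icc, Finset.mem_insert]; omega
    have hnm : b + 1 ∉ Finset.Icc a b := by simp
    rw [hins, Finset.prod_insert hnm, ih]
    have h1 := chi_sq (sb σ b)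
    have h2 : b + 1 - 1 = b := by ring
    rw [h2]
    linear_combination (χ (sb σ (a - 1)) * χ (sb σ (b + 1))) * h1

lemma eta_eps_top {n : ℕ} (σ : Config n) :
    η (eps σ ((n : ℤ) + 1)) = ∏ x ∈ Finset.Icc (-(n : ℤ)) (n : ℤ), η (eps σ x) := by
  rw [Finset.prod_congr rfl (fun x _ => η_eps σ x), tele σ _ _ (by omega)]
  rw [η_eps]
  have h2 : (n : ℤ) + 1 - 1 = (n : ℤ) := by ring
  rw [h2, sb_off σ (x := -(n:ℤ) - 1) (by simp only [Finset.mem_Icc]; omega),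
    sb_off σ (x := (n:ℤ) + 1) (by simp only [Finset.mem_Icc]; omega)]
  ring

lemma phi_inj (n : ℕ) :
    Function.Injective
      (fun (σ : Config n) (p : {x // x ∈ Finset.Icc (-(n : ℤ)) (n : ℤ)}) => eps σ p.1) := by
  intro σ σ' hΦ
  have key : ∀ x : ℤ, -(n : ℤ) - 1 ≤ x → sb σ x = sb σ' x := by
    intro x hx
    refine Int.le_induction (motive := fun x _ => sb σ x = sb σ' x) ?_ ?_ x hx
    · rw [sb_off σ (by simp only [Finset.mem_Icc]; omega),
        sb_off σ' (by simp only [Finset.mem_Icc]; omega)]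
    · intro x hx ih
      by_cases hmem : x + 1 ∈ Finset.Icc (-(n : ℤ)) (n : ℤ)
      · have he : eps σ (x + 1) = eps σ' (x + 1) := congrFun hΦ ⟨x + 1, hmem⟩
        unfold eps at he
        have h2 : x + 1 - 1 = x := by ring
        rw [h2, ih] at he
        revert he
        cases sb σ' x <;> cases sb σ (x + 1) <;> cases sb σ' (x + 1) <;> simp
      · rw [sb_off σ hmem, sb_off σ' hmem]
  funext p
  have h := key p.1 (by have := p.2; simp only [Finset.mem_Icc] at this; omega)
  unfold sb at h
  rw [dif_pos p.2, dif_pos p.2] at h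
  simpa using h

lemma sumprod (n : ℕ) (h : ℤ → Bool → ℝ) :
    ∑ σ : Config n, ∏ x ∈ Finset.Icc (-(n : ℤ)) (n : ℤ), h x (eps σ x)
      = ∏ x ∈ Finset.Icc (-(n : ℤ)) (n : ℤ), (h x false + h x true) := by
  have hbij := Finite.injective_iff_bijective.mp (phi_inj n)
  have step1 :
      ∑ σ : Config n, ∏ x ∈ Finset.Icc (-(n : ℤ)) (n : ℤ), h x (eps σ x)
        = ∑ τ : Config n, ∏ p : {x // x ∈ Finset.Icc (-(n : ℤ)) (n : ℤ)}, h p.1 (τ p) := by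
    apply Fintype.sum_bijective _ hbij
    intro σ
    rw [← Finset.prod_coe_sort]
  rw [step1, ← Finset.prod_coe_sort]
  have : ∀ p : {x // x ∈ Finset.Icc (-(n : ℤ)) (n : ℤ)},
      h p.1 false + h p.1 true = ∑ b : Bool, h p.1 b := by
    intro p; rw [Fintype.sum_bool]; ring
  rw [Finset.prod_congr rfl (fun p _ => this p)]
  rw [Finset.prod_univ_sum]
  rw [Fintype.piFinset_univ]

lemma master (n : ℕ) (g : ℤ → Bool → ℝ) :
    ∑ σ : Config n, ∏ x ∈ Finset.Icc (-(n : ℤ)) ((n : ℤ) + 1), g x (eps σ x)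
      = (1 / 2) * ((∏ x ∈ Finset.Icc (-(n : ℤ)) ((n : ℤ) + 1), (g x false + g x true))
          + ∏ x ∈ Finset.Icc (-(n : ℤ)) ((n : ℤ) + 1), (g x false - g x true)) := by
  have hins : Finset.Icc (-(n : ℤ)) ((n : ℤ) + 1)
      = insert ((n : ℤ) + 1) (Finset.Icc (-(n : ℤ)) (n : ℤ)) := by
    ext y; simp only [Finset.mem_Icc, Finset.mem_insert]; omega
  have hnm : ((n : ℤ) + 1) ∉ Finset.Icc (-(n : ℤ)) (n : ℤ) := by
    simp only [Finset.mem_Icc]; omega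
  rw [hins]
  simp only [Finset.prod_insert hnm]
  have hrep : ∀ σ : Config n,
      g ((n : ℤ) + 1) (eps σ ((n : ℤ) + 1)) * ∏ x ∈ Finset.Icc (-(n : ℤ)) (n : ℤ), g x (eps σ x)
        = (1 / 2) * ((g ((n : ℤ) + 1) false + g ((n : ℤ) + 1) true)
              * ∏ x ∈ Finset.Icc (-(n : ℤ)) (n : ℤ), g x (eps σ x))
          + (1 / 2) * ((g ((n : ℤ) + 1) false - g ((n : ℤ) + 1) true)
              * ∏ x ∈ Finset.Icc (-(n : ℤ)) (n : ℤ), (g x (eps σ x) * η (eps σ x))) := by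
    intro σ
    rw [Finset.prod_mul_distrib, ← eta_eps_top σ]
    cases h : eps σ ((n : ℤ) + 1) <;> simp only [η, if_true, if_false, Bool.false_eq_true] <;> ring
  rw [Finset.sum_congr rfl (fun σ _ => hrep σ), Finset.sum_add_distrib,
    ← Finset.mul_sum, ← Finset.mul_sum, ← Finset.mul_sum, ← Finset.mul_sum,
    sumprod n g, sumprod n (fun x b => g x b * η b)]
  have hD : ∏ x ∈ Finset.Icc (-(n : ℤ)) (n : ℤ), (g x false * η false + g x true * η true)
      = ∏ x ∈ Finset.Icc (-(n : ℤ)) (n : ℤ), (g x false - g x true) :=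
    Finset.prod_congr rfl (fun x _ => by simp only [η, if_true, if_false, Bool.false_eq_true]; ring)
  rw [hD]
  ring


lemma eps_left {n : ℕ} (σ : Config n) : eps σ (-(n : ℤ)) = !(sb σ (-(n : ℤ))) := by
  unfold eps
  rw [sb_off σ (x := -(n:ℤ) - 1) (by simp only [Finset.mem_Icc]; omega)]
  cases sb σ (-(n : ℤ)) <;> rfl

lemma eps_right {n : ℕ} (σ : Config n) : eps σ ((n : ℤ) + 1) = !(sb σ (n : ℤ)) := by
  unfold eps
  have h2 : (n : ℤ) + 1 - 1 = (n : ℤ) := by ring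
  rw [h2, sb_off σ (x := (n:ℤ) + 1) (by simp only [Finset.mem_Icc]; omega)]
  cases sb σ (n : ℤ) <;> rfl

lemma Hplus_eq (I : ℤ → ℝ) (n : ℕ) (σ : Config n) :
    Hplus I n σ = ∑ x ∈ Finset.Icc (-(n : ℤ)) ((n : ℤ) + 1), (if eps σ x then I x else 0) := by
  have hdec : Finset.Icc (-(n : ℤ)) ((n : ℤ) + 1)
      = insert (-(n : ℤ)) (insert ((n : ℤ) + 1) (Finset.Icc (-(n : ℤ) + 1) (n : ℤ))) := by
    ext y; simp only [Finset.mem_Icc, Finset.mem_insert]; omega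
  rw [hdec, Finset.sum_insert (by simp only [Finset.mem_insert, Finset.mem_Icc]; omega),
    Finset.sum_insert (by simp only [Finset.mem_Icc]; omega)]
  unfold Hplus
  have hI : ∀ x ∈ Finset.Icc (-(n : ℤ) + 1) (n : ℤ),
      I x * (if spin σ (x - 1) ≠ spin σ x then (1:ℝ) else 0) = (if eps σ x then I x else 0) := by
    intro x _
    by_cases h : eps σ x
    · rw [if_pos ((spin_ne_iff σ (x - 1) x).mpr h), if_pos h, mul_one]
    · rw [if_neg (fun hc => h ((spin_ne_iff σ (x - 1) x).mp hc)), if_neg h, mul_zero]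
  rw [Finset.sum_congr rfl hI]
  have hone : (1:ℝ) = χ true := by norm_num [χ]
  have hL : I (-(n : ℤ)) * (if spin σ (-(n : ℤ)) ≠ 1 then (1:ℝ) else 0)
      = (if eps σ (-(n : ℤ)) then I (-(n : ℤ)) else 0) := by
    rw [spin_eq, eps_left]
    cases hb : sb σ (-(n : ℤ)) <;> norm_num [χ]
  have hR : I ((n : ℤ) + 1) * (if spin σ (n : ℤ) ≠ 1 then (1:ℝ) else 0)
      = (if eps σ ((n : ℤ) + 1) then I ((n : ℤ) + 1) else 0) := by
    rw [spin_eq, eps_right]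
    cases hb : sb σ (n : ℤ) <;> norm_num [χ]
  rw [hL, hR]
  ring

lemma Hpm_eq (I : ℤ → ℝ) (n : ℕ) (σ : Config n) :
    Hpm I n σ = ∑ x ∈ Finset.Icc (-(n : ℤ)) ((n : ℤ) + 1),
      (if x = -(n : ℤ) then (if eps σ x then 0 else I x) else (if eps σ x then I x else 0)) := by
  have hins : Finset.Icc (-(n : ℤ)) ((n : ℤ) + 1)
      = insert (-(n : ℤ)) (Finset.Icc (-(n : ℤ) + 1) ((n : ℤ) + 1)) := by
    ext y; simp only [Finset.mem_Icc, Finset.mem_insert]; omega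
  have hnm : -(n : ℤ) ∉ Finset.Icc (-(n : ℤ) + 1) ((n : ℤ) + 1) := by
    simp only [Finset.mem_Icc]; omega
  unfold Hpm
  rw [Hplus_eq, hins, Finset.sum_insert hnm, Finset.sum_insert hnm, if_pos rfl]
  have hcong : ∀ x ∈ Finset.Icc (-(n : ℤ) + 1) ((n : ℤ) + 1),
      (if x = -(n : ℤ) then (if eps σ x then (0:ℝ) else I x) else (if eps σ x then I x else 0))
        = (if eps σ x then I x else 0) := by
    intro x hx
    rw [if_neg (by simp only [Finset.mem_Icc] at hx; omega)]
  rw [Finset.sum_congr rfl hcong, spin_eq]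
  cases hb : sb σ (-(n : ℤ)) <;>
    simp only [eps_left, hb, Bool.not_true, Bool.not_false, χ, if_true, if_false,
      Bool.false_eq_true] <;> ring

lemma exp_Hplus (β : ℝ) (I : ℤ → ℝ) (n : ℕ) (σ : Config n) :
    Real.exp (-β * Hplus I n σ)
      = ∏ x ∈ Finset.Icc (-(n : ℤ)) ((n : ℤ) + 1),
          (fun x b => if b then Real.exp (-β * I x) else 1) x (eps σ x) := by
  rw [Hplus_eq, Finset.mul_sum, Real.exp_sum]
  refine Finset.prod_congr rfl fun x _ => ?_
  by_cases h : eps σ x <;> simp [h]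

lemma exp_Hpm (β : ℝ) (I : ℤ → ℝ) (n : ℕ) (σ : Config n) :
    Real.exp (-β * Hpm I n σ)
      = ∏ x ∈ Finset.Icc (-(n : ℤ)) ((n : ℤ) + 1),
          (fun x b => if x = -(n : ℤ) then (if b then 1 else Real.exp (-β * I x))
            else (if b then Real.exp (-β * I x) else 1)) x (eps σ x) := by
  rw [Hpm_eq, Finset.mul_sum, Real.exp_sum]
  refine Finset.prod_congr rfl fun x _ => ?_
  by_cases hx : x = -(n : ℤ)
  · subst hx
    by_cases h : eps σ (-(n : ℤ)) <;> simp [h]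
  · by_cases h : eps σ x <;> simp [hx, h]

lemma reindex (f : ℤ → ℝ) (hf : ∀ x : ℤ, f x = f (1 - x)) (n : ℕ) :
    ∏ x ∈ Finset.Icc (-(n : ℤ)) ((n : ℤ) + 1), f x
      = ∏ i ∈ Finset.range (n + 1), (f ((i : ℤ) + 1)) ^ 2 := by
  have hsplit : Finset.Icc (-(n : ℤ)) ((n : ℤ) + 1)
      = Finset.Icc (-(n : ℤ)) 0 ∪ Finset.Icc 1 ((n : ℤ) + 1) := by
    ext y; simp only [Finset.mem_Icc, Finset.mem_union]; omega
  have hdisj : Disjoint (Finset.Icc (-(n : ℤ)) 0) (Finset.Icc 1 ((n : ℤ) + 1)) := by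
    rw [Finset.disjoint_left]
    intro a ha hb
    simp only [Finset.mem_Icc] at ha hb
    omega
  rw [hsplit, Finset.prod_union hdisj]
  have h1 : Finset.Icc (1 : ℤ) ((n : ℤ) + 1)
      = Finset.image (fun i : ℕ => (i : ℤ) + 1) (Finset.range (n + 1)) := by
    ext y; simp only [Finset.mem_Icc, Finset.mem_image, Finset.mem_range]
    constructor
    · intro hy; exact ⟨(y - 1).toNat, by omega, by omega⟩
    · rintro ⟨i, hi, rfl⟩; omega
  have h2 : Finset.Icc (-(n : ℤ)) 0
      = Finset.image (fun i : ℕ => -(i : ℤ)) (Finset.range (n + 1)) := by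
    ext y; simp only [Finset.mem_Icc, Finset.mem_image, Finset.mem_range]
    constructor
    · intro hy; exact ⟨(-y).toNat, by omega, by omega⟩
    · rintro ⟨i, hi, rfl⟩; omega
  rw [h1, h2, Finset.prod_image (by intro a _ b _ h; simpa using h),
    Finset.prod_image (by intro a _ b _ h; simpa using h), ← Finset.prod_mul_distrib]
  refine Finset.prod_congr rfl fun i _ => ?_
  have hneg : f (-(i : ℤ)) = f ((i : ℤ) + 1) := by
    rw [hf (-(i : ℤ))]
    congr 1
    ring
  rw [hneg]
  ring

end IsingAux

open IsingAux
/-- Proposition 1: under the symmetry condition `I_n = I_{-n+1}`, the partition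
functions `Z_n^+` and `Z_n^±` have the explicit product form (11). -/
theorem stmt_0 (β : ℝ) (hβ : 0 < β) (I : ℤ → ℝ)
    (hsym : ∀ n : ℤ, I n = I (-n + 1)) (n : ℕ) :
    Zplus β I n = (1 / 2) *
        ((∏ i ∈ Finset.range (n + 1), (1 + Real.exp (-β * I ((i : ℤ) + 1))) ^ 2)
          + ∏ i ∈ Finset.range (n + 1), (1 - Real.exp (-β * I ((i : ℤ) + 1))) ^ 2) ∧
    Zpm β I n = (1 / 2) *
        ((∏ i ∈ Finset.range (n + 1), (1 + Real.exp (-β * I ((i : ℤ) + 1))) ^ 2)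
          - ∏ i ∈ Finset.range (n + 1), (1 - Real.exp (-β * I ((i : ℤ) + 1))) ^ 2) := by
  have hIsym : ∀ x : ℤ, I x = I (1 - x) := by
    intro x
    rw [hsym x]
    congr 1
    ring
  have hplusf : ∀ x : ℤ, (1 + Real.exp (-β * I x)) = (1 + Real.exp (-β * I (1 - x))) := by
    intro x; rw [← hIsym x]
  have hminusf : ∀ x : ℤ, (1 - Real.exp (-β * I x)) = (1 - Real.exp (-β * I (1 - x))) := by
    intro x; rw [← hIsym x]
  have hP : ∏ x ∈ Finset.Icc (-(n : ℤ)) ((n : ℤ) + 1), (1 + Real.exp (-β * I x))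
      = ∏ i ∈ Finset.range (n + 1), (1 + Real.exp (-β * I ((i : ℤ) + 1))) ^ 2 :=
    reindex _ hplusf n
  have hM : ∏ x ∈ Finset.Icc (-(n : ℤ)) ((n : ℤ) + 1), (1 - Real.exp (-β * I x))
      = ∏ i ∈ Finset.range (n + 1), (1 - Real.exp (-β * I ((i : ℤ) + 1))) ^ 2 :=
    reindex _ hminusf n
  constructor
  · unfold Zplus
    rw [Finset.sum_congr rfl (fun σ _ => exp_Hplus β I n σ),
      master n (fun x b => if b then Real.exp (-β * I x) else 1)]
    have e1 : ∀ x : ℤ, ((if (false : Bool) then Real.exp (-β * I x) else (1:ℝ))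
        + (if (true : Bool) then Real.exp (-β * I x) else 1)) = 1 + Real.exp (-β * I x) := by
      intro x; simp
    have e2 : ∀ x : ℤ, ((if (false : Bool) then Real.exp (-β * I x) else (1:ℝ))
        - (if (true : Bool) then Real.exp (-β * I x) else 1)) = 1 - Real.exp (-β * I x) := by
      intro x; simp
    rw [Finset.prod_congr rfl (fun x _ => e1 x), Finset.prod_congr rfl (fun x _ => e2 x), hP, hM]
  · unfold Zpm
    rw [Finset.sum_congr rfl (fun σ _ => exp_Hpm β I n σ),
      master n (fun x b => if x = -(n : ℤ) then (if b then 1 else Real.exp (-β * I x))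
        else (if b then Real.exp (-β * I x) else 1))]
    have e1 : ∀ x ∈ Finset.Icc (-(n : ℤ)) ((n : ℤ) + 1),
        ((if x = -(n : ℤ) then (if (false : Bool) then (1:ℝ) else Real.exp (-β * I x))
            else (if (false : Bool) then Real.exp (-β * I x) else 1))
          + (if x = -(n : ℤ) then (if (true : Bool) then (1:ℝ) else Real.exp (-β * I x))
            else (if (true : Bool) then Real.exp (-β * I x) else 1)))
          = 1 + Real.exp (-β * I x) := by
      intro x _
      by_cases hx : x = -(n : ℤ) <;> simp [hx] <;> ring
    have hins : Finset.Icc (-(n : ℤ)) ((n : ℤ) + 1)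
        = insert (-(n : ℤ)) (Finset.Icc (-(n : ℤ) + 1) ((n : ℤ) + 1)) := by
      ext y; simp only [Finset.mem_Icc, Finset.mem_insert]; omega
    have hnm : -(n : ℤ) ∉ Finset.Icc (-(n : ℤ) + 1) ((n : ℤ) + 1) := by
      simp only [Finset.mem_Icc]; omega
    have e2 : ∏ x ∈ Finset.Icc (-(n : ℤ)) ((n : ℤ) + 1),
        ((if x = -(n : ℤ) then (if (false : Bool) then (1:ℝ) else Real.exp (-β * I x))
            else (if (false : Bool) then Real.exp (-β * I x) else 1))
          - (if x = -(n : ℤ) then (if (true : Bool) then (1:ℝ) else Real.exp (-β * I x))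
            else (if (true : Bool) then Real.exp (-β * I x) else 1)))
        = -∏ x ∈ Finset.Icc (-(n : ℤ)) ((n : ℤ) + 1), (1 - Real.exp (-β * I x)) := by
      rw [hins, Finset.prod_insert hnm, Finset.prod_insert hnm, if_pos rfl]
      have hrest : ∀ x ∈ Finset.Icc (-(n : ℤ) + 1) ((n : ℤ) + 1),
          ((if x = -(n : ℤ) then (if (false : Bool) then (1:ℝ) else Real.exp (-β * I x))
              else (if (false : Bool) then Real.exp (-β * I x) else 1))
            - (if x = -(n : ℤ) then (if (true : Bool) then (1:ℝ) else Real.exp (-β * I x))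
              else (if (true : Bool) then Real.exp (-β * I x) else 1)))
            = 1 - Real.exp (-β * I x) := by
        intro x hx
        have hx' : x ≠ -(n : ℤ) := by simp only [Finset.mem_Icc] at hx; omega
        simp [hx']
      rw [Finset.prod_congr rfl hrest]
      simp
      ring
    rw [Finset.prod_congr rfl e1, e2, hP, hM]
    ring
end

section
/- Let β > 0 and let (I_x)_{x∈ℤ} satisfy I_n = I_{−n+1} for all n ∈ ℤ. Then for every n ≥ 1 the partition functions satisfy the system of recursive equations Z_n^+ = (1 + e^{−2β I_{n+1}})·Z_{n−1}^+ + 2 e^{−β I_{n+1}}·Z_{n−1}^± and Z_n^± = (1 + e^{−2β I_{n+1}})·Z_{n−1}^± + 2 e^{−β I_{n+1}}·Z_{n−1}^+. -/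
open Finset

namespace Rec


variable {m : ℕ}

def bval (s : Bool) : ℝ := if s then 1 else -1

noncomputable def ext (a b : Bool) (τ : Config m) : Config (m+1) := fun x =>
  if hx : x.1 ∈ Finset.Icc (-(m:ℤ)) (m:ℤ) then τ ⟨x.1, hx⟩
  else if x.1 = (m:ℤ)+1 then b else a

lemma memL : -((m:ℤ)) ∈ Finset.Icc (-(m:ℤ)) (m:ℤ) := by
  simp [Finset.mem_Icc]

lemma memR : ((m:ℤ)) ∈ Finset.Icc (-(m:ℤ)) (m:ℤ) := by
  simp [Finset.mem_Icc]

lemma memL' : -(((m+1:ℕ)):ℤ) ∈ Finset.Icc (-((m+1:ℕ):ℤ)) ((m+1:ℕ):ℤ) := by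
  simp [Finset.mem_Icc]; omega

lemma memR' : (((m+1:ℕ)):ℤ) ∈ Finset.Icc (-((m+1:ℕ):ℤ)) ((m+1:ℕ):ℤ) := by
  simp [Finset.mem_Icc]; omega

lemma mem_outer {x : ℤ} (h1 : -(m:ℤ)-1 ≤ x) (h2 : x ≤ (m:ℤ)+1) :
    x ∈ Finset.Icc (-((m+1:ℕ):ℤ)) ((m+1:ℕ):ℤ) := by
  simp only [Finset.mem_Icc]; push_cast; omega

lemma ext_left (a b : Bool) (τ : Config m) (h : (-(m:ℤ)-1) ∈ Finset.Icc (-((m+1:ℕ):ℤ)) ((m+1:ℕ):ℤ)) :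
    ext a b τ ⟨-(m:ℤ)-1, h⟩ = a := by
  unfold ext
  rw [dif_neg (by show ¬(-(m:ℤ)-1 ∈ Finset.Icc (-(m:ℤ)) (m:ℤ)); simp only [Finset.mem_Icc]; omega)]
  rw [if_neg (by show ¬(-(m:ℤ)-1 = (m:ℤ)+1); omega)]

lemma ext_right (a b : Bool) (τ : Config m) (h : ((m:ℤ)+1) ∈ Finset.Icc (-((m+1:ℕ):ℤ)) ((m+1:ℕ):ℤ)) :
    ext a b τ ⟨(m:ℤ)+1, h⟩ = b := by
  unfold ext
  rw [dif_neg (by show ¬((m:ℤ)+1 ∈ Finset.Icc (-(m:ℤ)) (m:ℤ)); simp only [Finset.mem_Icc]; omega)]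
  rw [if_pos (by show (m:ℤ)+1 = (m:ℤ)+1; rfl)]

lemma ext_in (a b : Bool) (τ : Config m) {y : ℤ} (hy : y ∈ Finset.Icc (-(m:ℤ)) (m:ℤ))
    (h : y ∈ Finset.Icc (-((m+1:ℕ):ℤ)) ((m+1:ℕ):ℤ)) :
    ext a b τ ⟨y, h⟩ = τ ⟨y, hy⟩ := by
  unfold ext
  rw [dif_pos hy]

noncomputable def splitEquiv (m : ℕ) : Config (m+1) ≃ Bool × Bool × Config m where
  toFun σ := (σ ⟨-((m+1:ℕ):ℤ), memL'⟩, σ ⟨((m+1:ℕ):ℤ), memR'⟩,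
    fun x => σ ⟨x.1, by
      have := x.2; simp only [Finset.mem_Icc] at this ⊢; push_cast; omega⟩)
  invFun p := ext p.1 p.2.1 p.2.2
  left_inv σ := by
    funext x
    show ext _ _ _ x = σ x
    have hx2 := x.2
    simp only [Finset.mem_Icc] at hx2
    push_cast at hx2
    by_cases hx : x.1 ∈ Finset.Icc (-(m:ℤ)) (m:ℤ)
    · have hx' : x = ⟨x.1, x.2⟩ := Subtype.ext rfl
      rw [hx', ext_in _ _ _ hx]
    · simp only [Finset.mem_Icc, not_and_or, not_le] at hx
      by_cases hr : x.1 = (m:ℤ)+1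
      · have hx' : x = ⟨(m:ℤ)+1, by rw [← hr]; exact x.2⟩ := Subtype.ext hr
        rw [hx', ext_right]
        exact congrArg σ (Subtype.ext (by push_cast; omega))
      · have hv : x.1 = -(m:ℤ)-1 := by omega
        have hx' : x = ⟨-(m:ℤ)-1, by rw [← hv]; exact x.2⟩ := Subtype.ext hv
        rw [hx', ext_left]
        exact congrArg σ (Subtype.ext (by push_cast; omega))
  right_inv p := by
    obtain ⟨a, b, τ⟩ := p
    refine Prod.ext ?_ (Prod.ext ?_ ?_)
    · show ext a b τ ⟨-((m+1:ℕ):ℤ), memL'⟩ = a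
      have : (⟨-((m+1:ℕ):ℤ), memL'⟩ : {x // x ∈ Finset.Icc (-((m+1:ℕ):ℤ)) ((m+1:ℕ):ℤ)})
          = ⟨-(m:ℤ)-1, mem_outer (by omega) (by omega)⟩ := Subtype.ext (by push_cast; ring)
      rw [this, ext_left]
    · show ext a b τ ⟨((m+1:ℕ):ℤ), memR'⟩ = b
      have : (⟨((m+1:ℕ):ℤ), memR'⟩ : {x // x ∈ Finset.Icc (-((m+1:ℕ):ℤ)) ((m+1:ℕ):ℤ)})
          = ⟨(m:ℤ)+1, mem_outer (by omega) (by omega)⟩ := Subtype.ext (by push_cast; ring)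
      rw [this, ext_right]
    · funext x
      show ext a b τ ⟨x.1, _⟩ = τ x
      rw [ext_in _ _ _ x.2]

lemma spin_ext_in (a b : Bool) (τ : Config m) {y : ℤ}
    (h1 : -(m:ℤ) ≤ y) (h2 : y ≤ (m:ℤ)) :
    spin (ext a b τ) y = spin τ y := by
  have hy : y ∈ Finset.Icc (-(m:ℤ)) (m:ℤ) := by simp [Finset.mem_Icc]; omega
  have hy' : y ∈ Finset.Icc (-((m+1:ℕ):ℤ)) ((m+1:ℕ):ℤ) := mem_outer (by omega) (by omega)
  rw [spin, spin, dif_pos hy', dif_pos hy, ext_in _ _ _ hy]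

lemma spin_in (τ : Config m) {y : ℤ} (hy : y ∈ Finset.Icc (-(m:ℤ)) (m:ℤ)) :
    spin τ y = bval (τ ⟨y, hy⟩) := by
  rw [spin, dif_pos hy]; rfl

lemma spin_ext_left (a b : Bool) (τ : Config m) :
    spin (ext a b τ) (-(m:ℤ)-1) = bval a := by
  rw [spin, dif_pos (mem_outer (by omega) (by omega)), ext_left]; rfl

lemma spin_ext_right (a b : Bool) (τ : Config m) :
    spin (ext a b τ) ((m:ℤ)+1) = bval b := by
  rw [spin, dif_pos (mem_outer (by omega) (by omega)), ext_right]; rfl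


noncomputable def dis (r t : ℝ) : ℝ := if r ≠ t then 1 else 0

lemma dis_comm (r t : ℝ) : dis r t = dis t r := by
  unfold dis; simp [ne_comm]

noncomputable def S (I : ℤ → ℝ) (τ : Config m) : ℝ :=
  ∑ x ∈ Finset.Icc (-(m:ℤ)+1) (m:ℤ), I x * (if spin τ (x-1) ≠ spin τ x then 1 else 0)

def sL (τ : Config m) : Bool := τ ⟨-(m:ℤ), memL⟩
def sR (τ : Config m) : Bool := τ ⟨(m:ℤ), memR⟩

lemma Hplus_eq (I : ℤ → ℝ) (τ : Config m) :
    Hplus I m τ = S I τ + I (-(m:ℤ)) * dis (bval (sL τ)) 1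
      + I ((m:ℤ)+1) * dis (bval (sR τ)) 1 := by
  unfold Hplus S dis sL sR
  rw [spin_in τ memL, spin_in τ memR]

lemma Hpm_eq (I : ℤ → ℝ) (τ : Config m) :
    Hpm I m τ = Hplus I m τ + I (-(m:ℤ)) * bval (sL τ) := by
  unfold Hpm sL
  rw [spin_in τ memL]

lemma Hplus_ext (I : ℤ → ℝ) (a b : Bool) (τ : Config m) :
    Hplus I (m+1) (ext a b τ) =
      S I τ + I (-(m:ℤ)) * dis (bval a) (bval (sL τ))
        + I ((m:ℤ)+1) * dis (bval b) (bval (sR τ))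
        + I (-(m:ℤ)-1) * dis (bval a) 1 + I ((m:ℤ)+2) * dis (bval b) 1 := by
  have e1 : -(((m+1:ℕ)):ℤ) = -(m:ℤ)-1 := by push_cast; ring
  have e2 : (((m+1:ℕ)):ℤ) = (m:ℤ)+1 := by push_cast; ring
  unfold Hplus
  rw [e1, e2]
  have hset : Finset.Icc (-(m:ℤ)-1+1) ((m:ℤ)+1)
      = insert (-(m:ℤ)) (insert ((m:ℤ)+1) (Finset.Icc (-(m:ℤ)+1) (m:ℤ))) := by
    ext y; simp only [Finset.mem_Icc, Finset.mem_insert]; omega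
  rw [hset, Finset.sum_insert (by simp only [Finset.mem_insert, Finset.mem_Icc]; omega),
    Finset.sum_insert (by simp only [Finset.mem_Icc]; omega)]
  have e3 : (m:ℤ)+1-1 = (m:ℤ) := by ring
  have e4 : -(m:ℤ)-1+1 = -(m:ℤ) := by ring
  rw [e3]
  have hin : ∀ x ∈ Finset.Icc (-(m:ℤ)+1) (m:ℤ),
      I x * (if spin (ext a b τ) (x-1) ≠ spin (ext a b τ) x then (1:ℝ) else 0)
        = I x * (if spin τ (x-1) ≠ spin τ x then 1 else 0) := by
    intro x hx
    simp only [Finset.mem_Icc] at hx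
    rw [spin_ext_in a b τ (by omega) (by omega), spin_ext_in a b τ (by omega) (by omega)]
  rw [Finset.sum_congr rfl hin]
  rw [spin_ext_left, spin_ext_right,
    spin_ext_in a b τ (by omega) (by omega), spin_ext_in a b τ (by omega) (by omega),
    spin_in τ memL, spin_in τ memR]
  unfold S dis sL sR
  have hd : ∀ u v : ℝ, (if u ≠ v then (1:ℝ) else 0) = (if v ≠ u then 1 else 0) := by
    intro u v; simp [ne_comm]
  rw [hd (bval (τ ⟨(m:ℤ), memR⟩)) (bval b)]
  ring_nf

lemma Hpm_ext (I : ℤ → ℝ) (a b : Bool) (τ : Config m) :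
    Hpm I (m+1) (ext a b τ) =
      Hplus I (m+1) (ext a b τ) + I (-(m:ℤ)-1) * bval a := by
  have e1 : -(((m+1:ℕ)):ℤ) = -(m:ℤ)-1 := by push_cast; ring
  unfold Hpm
  rw [e1, spin_ext_left]


def flip (τ : Config m) : Config m := fun x => !(τ x)

def flipE (m : ℕ) : Config m ≃ Config m where
  toFun := flip
  invFun := flip
  left_inv τ := by funext x; simp [flip]
  right_inv τ := by funext x; simp [flip]

lemma spin_flip (τ : Config m) {y : ℤ} (hy : y ∈ Finset.Icc (-(m:ℤ)) (m:ℤ)) :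
    spin (flip τ) y = -spin τ y := by
  rw [spin, spin, dif_pos hy, dif_pos hy]
  show (if !(τ ⟨y, hy⟩) then (1:ℝ) else -1) = _
  cases τ ⟨y, hy⟩ <;> norm_num

lemma S_flip (I : ℤ → ℝ) (τ : Config m) : S I (flip τ) = S I τ := by
  unfold S
  refine Finset.sum_congr rfl fun x hx => ?_
  simp only [Finset.mem_Icc] at hx
  rw [spin_flip τ (by simp only [Finset.mem_Icc]; omega),
    spin_flip τ (by simp only [Finset.mem_Icc]; omega)]
  simp [ne_eq, neg_inj]

lemma sL_flip (τ : Config m) : sL (flip τ) = !(sL τ) := rfl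
lemma sR_flip (τ : Config m) : sR (flip τ) = !(sR τ) := rfl

def reflC (τ : Config m) : Config m := fun x =>
  τ ⟨-x.1, by have := x.2; simp only [Finset.mem_Icc] at this ⊢; omega⟩

def reflE (m : ℕ) : Config m ≃ Config m where
  toFun := reflC
  invFun := reflC
  left_inv τ := by
    funext x; show τ ⟨-(-x.1), _⟩ = τ x
    exact congrArg τ (Subtype.ext (neg_neg _))
  right_inv τ := by
    funext x; show τ ⟨-(-x.1), _⟩ = τ x
    exact congrArg τ (Subtype.ext (neg_neg _))

lemma spin_refl (τ : Config m) (y : ℤ) : spin (reflC τ) y = spin τ (-y) := by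
  by_cases hy : y ∈ Finset.Icc (-(m:ℤ)) (m:ℤ)
  · have hy' : -y ∈ Finset.Icc (-(m:ℤ)) (m:ℤ) := by
      simp only [Finset.mem_Icc] at hy ⊢; omega
    rw [spin, spin, dif_pos hy, dif_pos hy']
    rfl
  · have hy' : -y ∉ Finset.Icc (-(m:ℤ)) (m:ℤ) := by
      simp only [Finset.mem_Icc] at hy ⊢; omega
    rw [spin, spin, dif_neg hy, dif_neg hy']

lemma sL_refl (τ : Config m) : sL (reflC τ) = sR τ := by
  show τ ⟨-(-(m:ℤ)), _⟩ = τ ⟨(m:ℤ), memR⟩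
  exact congrArg τ (Subtype.ext (neg_neg _))

lemma sR_refl (τ : Config m) : sR (reflC τ) = sL τ := by
  show τ ⟨-(m:ℤ), _⟩ = τ ⟨-(m:ℤ), memL⟩
  rfl

lemma S_refl (I : ℤ → ℝ) (hsym : ∀ n : ℤ, I n = I (-n + 1)) (τ : Config m) :
    S I (reflC τ) = S I τ := by
  unfold S
  refine Finset.sum_nbij' (fun x => 1 - x) (fun x => 1 - x) ?_ ?_ ?_ ?_ ?_
  · intro x hx; simp only [Finset.mem_Icc] at hx ⊢; omega
  · intro x hx; simp only [Finset.mem_Icc] at hx ⊢; omega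
  · intro x _; ring
  · intro x _; ring
  · intro x hx
    rw [spin_refl, spin_refl]
    have h1 : I x = I (1 - x) := by rw [hsym x]; congr 1; ring
    have h2 : -(x-1) = 1 - x := by ring
    have h3 : (1:ℤ) - x - 1 = -x := by ring
    rw [h1, h2, h3]
    simp [ne_comm]

lemma Hplus_refl (I : ℤ → ℝ) (hsym : ∀ n : ℤ, I n = I (-n + 1)) (τ : Config m) :
    Hplus I m (reflC τ) = Hplus I m τ := by
  have hK : I (-(m:ℤ)) = I ((m:ℤ)+1) := by
    rw [hsym ((m:ℤ)+1)]; congr 1; ring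
  rw [Hplus_eq, Hplus_eq, S_refl I hsym, sL_refl, sR_refl, hK]
  ring


section Weights
variable (β : ℝ) (I : ℤ → ℝ) (m : ℕ)

noncomputable def fw (τ : Config m) : ℝ := Real.exp (-β * Hplus I m τ)

noncomputable def hw (s : Bool) : ℝ := Real.exp (-(β * (I ((m:ℤ)+1) * bval s)))

noncomputable def φp (a s : Bool) : ℝ :=
  Real.exp (-(β * (I ((m:ℤ)+1) * (dis (bval a) (bval s) - dis (bval s) 1)
    + I ((m:ℤ)+2) * dis (bval a) 1)))

noncomputable def φm (a s : Bool) : ℝ :=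
  φp β I m a s * Real.exp (-(β * (I ((m:ℤ)+2) * bval a)))

variable {β I m}

lemma hK (hsym : ∀ n : ℤ, I n = I (-n + 1)) : I (-(m:ℤ)) = I ((m:ℤ)+1) := by
  rw [hsym ((m:ℤ)+1)]; congr 1; ring

lemma hJ (hsym : ∀ n : ℤ, I n = I (-n + 1)) : I (-(m:ℤ)-1) = I ((m:ℤ)+2) := by
  rw [hsym ((m:ℤ)+2)]; congr 1; ring

lemma weight_plus (hsym : ∀ n : ℤ, I n = I (-n + 1)) (a b : Bool) (τ : Config m) :
    Real.exp (-β * Hplus I (m+1) (ext a b τ))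
      = fw β I m τ * φp β I m a (sL τ) * φp β I m b (sR τ) := by
  unfold fw φp
  rw [Hplus_ext I a b τ, Hplus_eq I τ, hK hsym, hJ hsym, ← Real.exp_add, ← Real.exp_add]
  congr 1; ring

lemma weight_pm (hsym : ∀ n : ℤ, I n = I (-n + 1)) (a b : Bool) (τ : Config m) :
    Real.exp (-β * Hpm I (m+1) (ext a b τ))
      = fw β I m τ * φm β I m a (sL τ) * φp β I m b (sR τ) := by
  unfold fw φm φp
  rw [Hpm_ext, Hplus_ext I a b τ, Hplus_eq I τ, hK hsym, hJ hsym,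
    ← Real.exp_add, ← Real.exp_add, ← Real.exp_add]
  congr 1; ring

lemma sum_φp (s : Bool) :
    φp β I m true s + φp β I m false s
      = 1 + Real.exp (-β * I ((m:ℤ)+2)) * hw β I m s := by
  cases s <;> norm_num [φp, hw, dis, bval] <;>
    rw [← Real.exp_add] <;> congr 1 <;> ring

lemma sum_φm (s : Bool) :
    φm β I m true s + φm β I m false s
      = Real.exp (-β * I ((m:ℤ)+2)) + hw β I m s := by
  cases s <;> norm_num [φm, φp, hw, dis, bval] <;> rw [← Real.exp_add] <;>
    congr 1 <;> ring

lemma fw_flip (hsym : ∀ n : ℤ, I n = I (-n + 1)) (τ : Config m) :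
    fw β I m (flip τ) = fw β I m τ * hw β I m (sL τ) * hw β I m (sR τ) := by
  unfold fw hw
  rw [Hplus_eq I (flip τ), Hplus_eq I τ, S_flip, sL_flip, sR_flip, hK hsym,
    ← Real.exp_add, ← Real.exp_add]
  congr 1
  cases sL τ <;> cases sR τ <;> norm_num [dis, bval] <;> ring

lemma sum_flip_hw (hsym : ∀ n : ℤ, I n = I (-n + 1)) :
    ∑ τ : Config m, fw β I m τ * hw β I m (sL τ) * hw β I m (sR τ)
      = ∑ τ : Config m, fw β I m τ := by
  have := Equiv.sum_comp (flipE m) (fw β I m)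
  rw [← this]
  refine Finset.sum_congr rfl fun τ _ => ?_
  exact (fw_flip hsym τ).symm

lemma sum_refl_hw (hsym : ∀ n : ℤ, I n = I (-n + 1)) :
    ∑ τ : Config m, fw β I m τ * hw β I m (sR τ)
      = ∑ τ : Config m, fw β I m τ * hw β I m (sL τ) := by
  have := Equiv.sum_comp (reflE m) (fun τ => fw β I m τ * hw β I m (sR τ))
  rw [← this]
  refine Finset.sum_congr rfl fun τ _ => ?_
  show fw β I m (reflC τ) * hw β I m (sR (reflC τ)) = _
  rw [sR_refl]
  unfold fw
  rw [Hplus_refl I hsym]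

lemma Zpm_sum (hsym : ∀ n : ℤ, I n = I (-n + 1)) : Zpm β I m = ∑ τ : Config m, fw β I m τ * hw β I m (sL τ) := by
  unfold Zpm fw hw
  refine Finset.sum_congr rfl fun τ _ => ?_
  rw [Hpm_eq, hK hsym, ← Real.exp_add]
  congr 1; ring

lemma Zplus_sum : Zplus β I m = ∑ τ : Config m, fw β I m τ := rfl


lemma split_sum (g : Config (m+1) → ℝ) :
    ∑ σ : Config (m+1), g σ = ∑ p : Bool × Bool × Config m, g (ext p.1 p.2.1 p.2.2) :=
  Fintype.sum_equiv (splitEquiv m) _ _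
    (fun σ => congrArg g ((splitEquiv m).left_inv σ).symm)

lemma Zplus_rec (hsym : ∀ n : ℤ, I n = I (-n + 1)) :
    Zplus β I (m+1) = (1 + Real.exp (-2 * β * I ((m:ℤ)+2))) * Zplus β I m
      + 2 * Real.exp (-β * I ((m:ℤ)+2)) * Zpm β I m := by
  have hv2 : Real.exp (-2 * β * I ((m:ℤ)+2))
      = Real.exp (-β * I ((m:ℤ)+2)) * Real.exp (-β * I ((m:ℤ)+2)) := by
    rw [← Real.exp_add]; congr 1; ring
  calc Zplus β I (m+1)
      = ∑ p : Bool × Bool × Config m,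
          Real.exp (-β * Hplus I (m+1) (ext p.1 p.2.1 p.2.2)) :=
        split_sum (fun σ => Real.exp (-β * Hplus I (m+1) σ))
    _ = ∑ τ : Config m, (fw β I m τ *
          ((φp β I m true (sL τ) + φp β I m false (sL τ))
            * (φp β I m true (sR τ) + φp β I m false (sR τ)))) := by
        rw [Fintype.sum_prod_type]
        simp only [Fintype.sum_prod_type, Fintype.sum_bool, weight_plus hsym]
        rw [← Finset.sum_add_distrib, ← Finset.sum_add_distrib, ← Finset.sum_add_distrib]
        exact Finset.sum_congr rfl fun τ _ => by ring
    _ = ∑ τ : Config m, (fw β I m τ *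
          ((1 + Real.exp (-β * I ((m:ℤ)+2)) * hw β I m (sL τ))
            * (1 + Real.exp (-β * I ((m:ℤ)+2)) * hw β I m (sR τ)))) := by
        refine Finset.sum_congr rfl fun τ _ => ?_
        rw [sum_φp, sum_φp]
    _ = ∑ τ : Config m, (fw β I m τ +
          (Real.exp (-β * I ((m:ℤ)+2)) * (fw β I m τ * hw β I m (sL τ)) +
            (Real.exp (-β * I ((m:ℤ)+2)) * (fw β I m τ * hw β I m (sR τ)) +
              Real.exp (-β * I ((m:ℤ)+2)) * Real.exp (-β * I ((m:ℤ)+2)) *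
                (fw β I m τ * hw β I m (sL τ) * hw β I m (sR τ))))) :=
        Finset.sum_congr rfl fun τ _ => by ring
    _ = (1 + Real.exp (-2 * β * I ((m:ℤ)+2))) * Zplus β I m
          + 2 * Real.exp (-β * I ((m:ℤ)+2)) * Zpm β I m := by
        rw [Finset.sum_add_distrib, Finset.sum_add_distrib, Finset.sum_add_distrib,
          ← Finset.mul_sum, ← Finset.mul_sum, ← Finset.mul_sum,
          sum_refl_hw hsym, sum_flip_hw hsym, ← Zpm_sum hsym, ← Zplus_sum, hv2]
        ring

lemma Zpm_rec (hsym : ∀ n : ℤ, I n = I (-n + 1)) :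
    Zpm β I (m+1) = (1 + Real.exp (-2 * β * I ((m:ℤ)+2))) * Zpm β I m
      + 2 * Real.exp (-β * I ((m:ℤ)+2)) * Zplus β I m := by
  have hv2 : Real.exp (-2 * β * I ((m:ℤ)+2))
      = Real.exp (-β * I ((m:ℤ)+2)) * Real.exp (-β * I ((m:ℤ)+2)) := by
    rw [← Real.exp_add]; congr 1; ring
  calc Zpm β I (m+1)
      = ∑ p : Bool × Bool × Config m,
          Real.exp (-β * Hpm I (m+1) (ext p.1 p.2.1 p.2.2)) :=
        split_sum (fun σ => Real.exp (-β * Hpm I (m+1) σ))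
    _ = ∑ τ : Config m, (fw β I m τ *
          ((φm β I m true (sL τ) + φm β I m false (sL τ))
            * (φp β I m true (sR τ) + φp β I m false (sR τ)))) := by
        rw [Fintype.sum_prod_type]
        simp only [Fintype.sum_prod_type, Fintype.sum_bool, weight_pm hsym]
        rw [← Finset.sum_add_distrib, ← Finset.sum_add_distrib, ← Finset.sum_add_distrib]
        exact Finset.sum_congr rfl fun τ _ => by ring
    _ = ∑ τ : Config m, (fw β I m τ *
          ((Real.exp (-β * I ((m:ℤ)+2)) + hw β I m (sL τ))
            * (1 + Real.exp (-β * I ((m:ℤ)+2)) * hw β I m (sR τ)))) := by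
        refine Finset.sum_congr rfl fun τ _ => ?_
        rw [sum_φm, sum_φp]
    _ = ∑ τ : Config m, (Real.exp (-β * I ((m:ℤ)+2)) * fw β I m τ +
          (fw β I m τ * hw β I m (sL τ) +
            (Real.exp (-β * I ((m:ℤ)+2)) * Real.exp (-β * I ((m:ℤ)+2)) *
                (fw β I m τ * hw β I m (sR τ)) +
              Real.exp (-β * I ((m:ℤ)+2)) *
                (fw β I m τ * hw β I m (sL τ) * hw β I m (sR τ))))) :=
        Finset.sum_congr rfl fun τ _ => by ring
    _ = (1 + Real.exp (-2 * β * I ((m:ℤ)+2))) * Zpm β I m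
          + 2 * Real.exp (-β * I ((m:ℤ)+2)) * Zplus β I m := by
        rw [Finset.sum_add_distrib, Finset.sum_add_distrib, Finset.sum_add_distrib,
          ← Finset.mul_sum, ← Finset.mul_sum, ← Finset.mul_sum,
          sum_refl_hw hsym, sum_flip_hw hsym, ← Zpm_sum hsym, ← Zplus_sum, hv2]
        ring

end Weights
end Rec

/-- The system of recursive equations (12). -/
theorem stmt_1 (β : ℝ) (hβ : 0 < β) (I : ℤ → ℝ)
    (hsym : ∀ n : ℤ, I n = I (-n + 1)) (n : ℕ) (hn : 1 ≤ n) :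
    Zplus β I n = (1 + Real.exp (-2 * β * I ((n : ℤ) + 1))) * Zplus β I (n - 1)
        + 2 * Real.exp (-β * I ((n : ℤ) + 1)) * Zpm β I (n - 1) ∧
    Zpm β I n = (1 + Real.exp (-2 * β * I ((n : ℤ) + 1))) * Zpm β I (n - 1)
        + 2 * Real.exp (-β * I ((n : ℤ) + 1)) * Zplus β I (n - 1) := by
  obtain ⟨m, rfl⟩ : ∃ m, n = m + 1 := ⟨n - 1, by omega⟩
  simp only [Nat.add_sub_cancel]
  rw [show ((m+1:ℕ):ℤ) + 1 = (m:ℤ)+2 by push_cast; ring]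
  exact ⟨Rec.Zplus_rec hsym, Rec.Zpm_rec hsym⟩
end

section
/- Let β > 0 and let (I_x)_{x∈ℤ} satisfy I_n = I_{−n+1} for all n ∈ ℤ. Then for every n ∈ ℕ the difference and sum of the partition functions are given by the products X_n := Z_n^+ − Z_n^± = ∏_{i=0}^{n} (1 − e^{−β I_{i+1}})^2 and Y_n := Z_n^+ + Z_n^± = ∏_{i=0}^{n} (1 + e^{−β I_{i+1}})^2. -/
open Finset

def extS (m : ℕ) (σ : Fin m → Bool) (j : ℕ) : Bool :=
  if h : j < m then σ ⟨j, h⟩ else true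

def sgn (b : Bool) : ℝ := if b then 1 else -1

noncomputable def W (m : ℕ) (w : ℕ → ℝ) (σ : Fin m → Bool) : ℝ :=
  ∏ i ∈ Finset.range m, (if extS m σ i ≠ extS m σ (i+1) then w i else 1)

lemma extS_cons_succ (m : ℕ) (s : Bool) (σ : Fin m → Bool) (j : ℕ) :
    extS (m+1) (Fin.cons s σ) (j+1) = extS m σ j := by
  unfold extS
  by_cases h : j < m
  · rw [dif_pos (by omega), dif_pos h]
    exact Fin.cons_succ (α := fun _ => Bool) s σ ⟨j, h⟩
  · rw [dif_neg (by omega), dif_neg h]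

lemma extS_cons_zero (m : ℕ) (s : Bool) (σ : Fin m → Bool) :
    extS (m+1) (Fin.cons s σ) 0 = s := by
  unfold extS; rw [dif_pos (by omega)]; rfl

lemma W_cons (m : ℕ) (w : ℕ → ℝ) (s : Bool) (σ : Fin m → Bool) :
    W (m+1) w (Fin.cons s σ) =
      (if s ≠ extS m σ 0 then w 0 else 1) * W m (fun i => w (i+1)) σ := by
  unfold W
  rw [Finset.prod_range_succ', mul_comm]
  have h0 : (if extS (m+1) (Fin.cons s σ) 0 ≠ extS (m+1) (Fin.cons s σ) (0+1) then w 0 else 1)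
      = (if s ≠ extS m σ 0 then w 0 else 1) := by
    rw [extS_cons_zero, extS_cons_succ]
  rw [h0]
  congr 1
  exact Finset.prod_congr rfl (fun i _ => by rw [extS_cons_succ, extS_cons_succ])

lemma sum_succ (m : ℕ) (f : (Fin (m+1) → Bool) → ℝ) :
    ∑ σ : Fin (m+1) → Bool, f σ = ∑ s : Bool, ∑ σ : Fin m → Bool, f (Fin.cons s σ) := by
  rw [← (Fin.consEquiv (fun _ => Bool)).sum_comp f, Fintype.sum_prod_type]
  rfl

lemma sumY : ∀ (m : ℕ) (w : ℕ → ℝ),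
    ∑ σ : Fin m → Bool, W m w σ = ∏ i ∈ Finset.range m, (1 + w i) := by
  intro m
  induction m with
  | zero => intro w; simp [W]
  | succ m ih =>
    intro w
    rw [sum_succ, Finset.prod_range_succ']
    rw [Fintype.sum_bool]
    simp only [W_cons]
    rw [← Finset.sum_add_distrib]
    have : ∀ σ : Fin m → Bool,
        (if true ≠ extS m σ 0 then w 0 else 1) * W m (fun i => w (i+1)) σ
        + (if false ≠ extS m σ 0 then w 0 else 1) * W m (fun i => w (i+1)) σ
        = (1 + w 0) * W m (fun i => w (i+1)) σ := by
      intro σ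
      cases h : extS m σ 0 <;> simp [h] <;> ring
    rw [Finset.sum_congr rfl (fun σ _ => this σ), ← Finset.mul_sum, ih]
    ring

lemma sumX : ∀ (m : ℕ) (w : ℕ → ℝ),
    ∑ σ : Fin m → Bool, sgn (extS m σ 0) * W m w σ = ∏ i ∈ Finset.range m, (1 - w i) := by
  intro m
  induction m with
  | zero =>
    intro w
    have key : ∀ σ : Fin 0 → Bool, sgn (extS 0 σ 0) * W 0 w σ = 1 := by
      intro σ
      have h : extS 0 σ 0 = true := by unfold extS; rw [dif_neg (by omega)]
      simp [W, sgn, h]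
    rw [Finset.sum_congr rfl (fun σ _ => key σ)]
    simp
  | succ m ih =>
    intro w
    rw [sum_succ, Finset.prod_range_succ']
    rw [Fintype.sum_bool]
    simp only [W_cons, extS_cons_zero]
    rw [← Finset.sum_add_distrib]
    have : ∀ σ : Fin m → Bool,
        sgn true * ((if true ≠ extS m σ 0 then w 0 else 1) * W m (fun i => w (i+1)) σ)
        + sgn false * ((if false ≠ extS m σ 0 then w 0 else 1) * W m (fun i => w (i+1)) σ)
        = (1 - w 0) * (sgn (extS m σ 0) * W m (fun i => w (i+1)) σ) := by
      intro σ
      cases h : extS m σ 0 <;> simp [h, sgn] <;> ring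
    rw [Finset.sum_congr rfl (fun σ _ => this σ), ← Finset.mul_sum, ih]
    ring

noncomputable def wts (β : ℝ) (I : ℤ → ℝ) (n : ℕ) (i : ℕ) : ℝ :=
  Real.exp (-β * I (-(n:ℤ) + i + 1))

lemma sgn_inj (a b : Bool) : sgn a = sgn b ↔ a = b := by
  cases a <;> cases b <;> norm_num [sgn]

def q (n : ℕ) : (Fin (2*n+1) → Bool) ≃ Config n where
  toFun τ x := τ ⟨(x.1 + n).toNat, by
    have := x.2; rw [Finset.mem_Icc] at this; omega⟩
  invFun σ i := σ ⟨-(n:ℤ) + i, by rw [Finset.mem_Icc]; have := i.isLt; omega⟩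
  left_inv τ := by
    funext i
    beta_reduce
    congr 1
    apply Fin.ext
    show (-(n:ℤ) + (i:ℕ) + n).toNat = (i:ℕ)
    have := i.isLt
    omega
  right_inv σ := by
    funext x
    beta_reduce
    congr 1
    apply Subtype.ext
    show -(n:ℤ) + ((x.1 + n).toNat : ℕ) = x.1
    have := x.2; rw [Finset.mem_Icc] at this
    omega

lemma spin_q (n : ℕ) (τ : Fin (2*n+1) → Bool) (j : ℕ) (hj : j < 2*n+1) :
    spin (q n τ) (-(n:ℤ) + j) = sgn (extS (2*n+1) τ j) := by
  have hx : -(n:ℤ) + j ∈ Finset.Icc (-(n:ℤ)) (n:ℤ) := by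
    rw [Finset.mem_Icc]; omega
  unfold spin extS sgn
  rw [dif_pos hx, dif_pos hj]
  have : (q n τ) ⟨-(n:ℤ) + j, hx⟩ = τ ⟨j, hj⟩ := by
    show τ _ = τ _
    congr 1
    apply Fin.ext
    show ((-(n:ℤ) + j) + n).toNat = j
    omega
  rw [this]


lemma exp_L (β : ℝ) (I : ℤ → ℝ) (n : ℕ) (τ : Fin (2*n+1) → Bool) :
    Real.exp (-β * (I (-(n:ℤ)) * (if spin (q n τ) (-(n:ℤ)) ≠ 1 then 1 else 0)))
      = (if extS (2*n+1) τ 0 then 1 else Real.exp (-β * I (-(n:ℤ)))) := by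
  have h0 : spin (q n τ) (-(n:ℤ)) = sgn (extS (2*n+1) τ 0) := by
    have := spin_q n τ 0 (by omega)
    simpa using this
  rw [h0]
  cases h : extS (2*n+1) τ 0 <;> norm_num [sgn]

lemma exp_R (β : ℝ) (I : ℤ → ℝ) (n : ℕ) (τ : Fin (2*n+1) → Bool) :
    Real.exp (-β * (I ((n:ℤ)+1) * (if spin (q n τ) (n:ℤ) ≠ 1 then 1 else 0)))
      = (if extS (2*n+1) τ (2*n) ≠ extS (2*n+1) τ (2*n+1) then wts β I n (2*n) else 1) := by
  have h0 : spin (q n τ) (n:ℤ) = sgn (extS (2*n+1) τ (2*n)) := by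
    have := spin_q n τ (2*n) (by omega)
    have harg : -(n:ℤ) + ((2*n : ℕ):ℤ) = (n:ℤ) := by push_cast; ring
    rw [harg] at this; exact this
  have htop : extS (2*n+1) τ (2*n+1) = true := by unfold extS; rw [dif_neg (by omega)]
  have hw : wts β I n (2*n) = Real.exp (-β * I ((n:ℤ)+1)) := by
    unfold wts
    have harg : -(n:ℤ) + ((2*n : ℕ):ℤ) + 1 = (n:ℤ)+1 := by push_cast; ring
    rw [harg]
  rw [h0, htop, hw]
  cases h : extS (2*n+1) τ (2*n) <;> norm_num [sgn]

lemma exp_S (β : ℝ) (I : ℤ → ℝ) (n : ℕ) (τ : Fin (2*n+1) → Bool) :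
    Real.exp (-β * ∑ x ∈ Finset.Icc (-(n:ℤ)+1) (n:ℤ),
        I x * (if spin (q n τ) (x-1) ≠ spin (q n τ) x then 1 else 0))
      = ∏ i ∈ Finset.range (2*n),
          (if extS (2*n+1) τ i ≠ extS (2*n+1) τ (i+1) then wts β I n i else 1) := by
  rw [Finset.mul_sum, Real.exp_sum]
  have hIcc : Finset.Icc (-(n:ℤ)+1) (n:ℤ)
      = Finset.image (fun i : ℕ => -(n:ℤ)+1+i) (Finset.range (2*n)) := by
    ext x
    simp only [Finset.mem_Icc, Finset.mem_image, Finset.mem_range]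
    constructor
    · intro hx
      exact ⟨(x + n - 1).toNat, by omega, by omega⟩
    · rintro ⟨i, hi, rfl⟩
      omega
  rw [hIcc, Finset.prod_image (by intro a _ b _ h; simp at h; omega)]
  apply Finset.prod_congr rfl
  intro i hi
  rw [Finset.mem_range] at hi
  have h1 : spin (q n τ) (-(n:ℤ)+1+i - 1) = sgn (extS (2*n+1) τ i) := by
    have := spin_q n τ i (by omega)
    have harg : -(n:ℤ)+1+(i:ℤ) - 1 = -(n:ℤ) + i := by ring
    rw [harg]; exact this
  have h2 : spin (q n τ) (-(n:ℤ)+1+i) = sgn (extS (2*n+1) τ (i+1)) := by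
    have := spin_q n τ (i+1) (by omega)
    have harg : -(n:ℤ) + ((i+1 : ℕ):ℤ) = -(n:ℤ)+1+(i:ℤ) := by push_cast; ring
    rw [harg] at this; exact this
  have hw : wts β I n i = Real.exp (-β * I (-(n:ℤ)+1+i)) := by
    unfold wts
    have harg : -(n:ℤ) + (i:ℤ) + 1 = -(n:ℤ)+1+(i:ℤ) := by ring
    rw [harg]
  rw [h1, h2, hw]
  have hiff : (sgn (extS (2*n+1) τ i) ≠ sgn (extS (2*n+1) τ (i+1)))
      ↔ (extS (2*n+1) τ i ≠ extS (2*n+1) τ (i+1)) := not_congr (sgn_inj _ _)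
  by_cases hc : extS (2*n+1) τ i ≠ extS (2*n+1) τ (i+1)
  · rw [if_pos (hiff.mpr hc), if_pos hc, mul_one]
  · rw [if_neg (fun hh => hc (hiff.mp hh)), if_neg hc, mul_zero, mul_zero, Real.exp_zero]

lemma exp_Hplus (β : ℝ) (I : ℤ → ℝ) (n : ℕ) (τ : Fin (2*n+1) → Bool) :
    Real.exp (-β * Hplus I n (q n τ)) =
      (if extS (2*n+1) τ 0 then 1 else Real.exp (-β * I (-(n:ℤ)))) * W (2*n+1) (wts β I n) τ := by
  unfold Hplus
  rw [mul_add, mul_add, Real.exp_add, Real.exp_add]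
  rw [exp_L, exp_S, exp_R]
  unfold W
  rw [Finset.prod_range_succ]
  ring

lemma bc (β : ℝ) (c : ℝ) (b : Bool) :
    (if b then 1 else Real.exp (-β * c)) * Real.exp (-β * (c * sgn b))
      = (if b then Real.exp (-β * c) else 1) := by
  cases b
  · simp only [sgn, if_false, Bool.false_eq_true]
    rw [← Real.exp_add, show -β*c + -β*(c * -1) = 0 by ring, Real.exp_zero]
  · simp only [sgn, if_true]
    rw [one_mul, mul_one]

lemma exp_Hpm (β : ℝ) (I : ℤ → ℝ) (n : ℕ) (τ : Fin (2*n+1) → Bool) :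
    Real.exp (-β * Hpm I n (q n τ)) =
      (if extS (2*n+1) τ 0 then Real.exp (-β * I (-(n:ℤ))) else 1) * W (2*n+1) (wts β I n) τ := by
  unfold Hpm
  rw [mul_add, Real.exp_add, exp_Hplus]
  have h0 : spin (q n τ) (-(n:ℤ)) = sgn (extS (2*n+1) τ 0) := by
    simpa using spin_q n τ 0 (by omega)
  rw [h0, mul_right_comm, bc]

lemma final (F : ℤ → ℝ) (hF : ∀ x : ℤ, F x = F (1 - x)) (n : ℕ) :
    F (-(n:ℤ)) * ∏ i ∈ Finset.range (2*n+1), F (-(n:ℤ) + i + 1)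
      = ∏ i ∈ Finset.range (n+1), (F ((i:ℤ)+1))^2 := by
  have h1 : ∏ i ∈ Finset.range (2*n+2), F (-(n:ℤ) + i)
      = F (-(n:ℤ)) * ∏ i ∈ Finset.range (2*n+1), F (-(n:ℤ) + i + 1) := by
    rw [Finset.prod_range_succ' (fun i => F (-(n:ℤ) + (i:ℕ))) (2*n+1), mul_comm]
    congr 1
    · simp
    · exact Finset.prod_congr rfl fun i _ => by congr 1; push_cast; ring
  rw [← h1, show 2*n+2 = (n+1) + (n+1) by ring, Finset.prod_range_add]
  have h2 : ∏ i ∈ Finset.range (n+1), F (-(n:ℤ) + i)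
      = ∏ i ∈ Finset.range (n+1), F ((i:ℤ)+1) := by
    have step1 : ∏ i ∈ Finset.range (n+1), F (-(n:ℤ) + i)
        = ∏ i ∈ Finset.range (n+1), F ((↑(n - i):ℤ)+1) := by
      apply Finset.prod_congr rfl
      intro i hi
      rw [Finset.mem_range] at hi
      rw [hF (-(n:ℤ) + i)]
      congr 1
      omega
    rw [step1]
    have := Finset.prod_range_reflect (fun j => F ((j:ℤ)+1)) (n+1)
    simpa using this
  have h3 : ∏ i ∈ Finset.range (n+1), F (-(n:ℤ) + ↑(n+1+i))
      = ∏ i ∈ Finset.range (n+1), F ((i:ℤ)+1) := by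
    apply Finset.prod_congr rfl
    intro i _
    congr 1
    push_cast; ring
  rw [h2, h3, ← Finset.prod_mul_distrib]
  exact Finset.prod_congr rfl fun i _ => (sq _).symm


/-- Equations (13): the difference `X_n = Z_n^+ - Z_n^±` and the sum
`Y_n = Z_n^+ + Z_n^±` are explicit products, under the symmetry condition. -/
theorem stmt_2 (β : ℝ) (hβ : 0 < β) (I : ℤ → ℝ)
    (hsym : ∀ n : ℤ, I n = I (-n + 1)) (n : ℕ) :
    Zplus β I n - Zpm β I n
        = ∏ i ∈ Finset.range (n + 1), (1 - Real.exp (-β * I ((i : ℤ) + 1))) ^ 2 ∧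
    Zplus β I n + Zpm β I n
        = ∏ i ∈ Finset.range (n + 1), (1 + Real.exp (-β * I ((i : ℤ) + 1))) ^ 2 := by
  have hZp : Zplus β I n = ∑ τ : Fin (2*n+1) → Bool,
      (if extS (2*n+1) τ 0 then 1 else Real.exp (-β * I (-(n:ℤ)))) * W (2*n+1) (wts β I n) τ := by
    unfold Zplus
    rw [← Equiv.sum_comp (q n) (fun σ => Real.exp (-β * Hplus I n σ))]
    exact Finset.sum_congr rfl fun τ _ => exp_Hplus β I n τ
  have hZm : Zpm β I n = ∑ τ : Fin (2*n+1) → Bool,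
      (if extS (2*n+1) τ 0 then Real.exp (-β * I (-(n:ℤ))) else 1) * W (2*n+1) (wts β I n) τ := by
    unfold Zpm
    rw [← Equiv.sum_comp (q n) (fun σ => Real.exp (-β * Hpm I n σ))]
    exact Finset.sum_congr rfl fun τ _ => exp_Hpm β I n τ
  constructor
  · rw [hZp, hZm, ← Finset.sum_sub_distrib]
    have key : ∀ τ : Fin (2*n+1) → Bool,
        (if extS (2*n+1) τ 0 then 1 else Real.exp (-β * I (-(n:ℤ)))) * W (2*n+1) (wts β I n) τ
        - (if extS (2*n+1) τ 0 then Real.exp (-β * I (-(n:ℤ))) else 1) * W (2*n+1) (wts β I n) τ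
        = (1 - Real.exp (-β * I (-(n:ℤ)))) * (sgn (extS (2*n+1) τ 0) * W (2*n+1) (wts β I n) τ) := by
      intro τ
      cases h : extS (2*n+1) τ 0 <;> simp [sgn] <;> ring
    rw [Finset.sum_congr rfl fun τ _ => key τ, ← Finset.mul_sum, sumX]
    have hF : ∀ x : ℤ, (fun y => 1 - Real.exp (-β * I y)) x
        = (fun y => 1 - Real.exp (-β * I y)) (1 - x) := by
      intro x
      have h1 : (-x+1 : ℤ) = 1-x := by ring
      simp only
      rw [hsym x, h1]
    have := final (fun y => 1 - Real.exp (-β * I y)) hF n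
    simpa [wts] using this
  · rw [hZp, hZm, ← Finset.sum_add_distrib]
    have key : ∀ τ : Fin (2*n+1) → Bool,
        (if extS (2*n+1) τ 0 then 1 else Real.exp (-β * I (-(n:ℤ)))) * W (2*n+1) (wts β I n) τ
        + (if extS (2*n+1) τ 0 then Real.exp (-β * I (-(n:ℤ))) else 1) * W (2*n+1) (wts β I n) τ
        = (1 + Real.exp (-β * I (-(n:ℤ)))) * W (2*n+1) (wts β I n) τ := by
      intro τ
      cases h : extS (2*n+1) τ 0 <;> simp [sgn] <;> ring
    rw [Finset.sum_congr rfl fun τ _ => key τ, ← Finset.mul_sum, sumY]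
    have hF : ∀ x : ℤ, (fun y => 1 + Real.exp (-β * I y)) x
        = (fun y => 1 + Real.exp (-β * I y)) (1 - x) := by
      intro x
      have h1 : (-x+1 : ℤ) = 1-x := by ring
      simp only
      rw [hsym x, h1]
    have := final (fun y => 1 + Real.exp (-β * I y)) hF n
    simpa [wts] using this
end

section
/- Consider the Ising model, i.e. I_x = I for all x ∈ ℤ with a fixed real I, and let β > 0 and τ = e^{−β I}. Then for every n ∈ ℕ one has Z_n^+ = (1/2)·( (1+τ)^{2(n+1)} + (1−τ)^{2(n+1)} ) and Z_n^± = (1/2)·( (1+τ)^{2(n+1)} − (1−τ)^{2(n+1)} ). -/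
open Finset

noncomputable def edgeF (τ : ℝ) (x y : Bool) : ℝ := if x = y then 1 else τ

def bseq {m : ℕ} (a b : Bool) (f : Fin m → Bool) : Fin (m + 2) → Bool :=
  Fin.cons a (Fin.snoc f b)

noncomputable def wt (τ : ℝ) {m : ℕ} (a b : Bool) (f : Fin m → Bool) : ℝ :=
  ∏ i : Fin (m + 1), edgeF τ (bseq a b f i.castSucc) (bseq a b f i.succ)


@[simp] lemma bseq_zero {m : ℕ} (a b : Bool) (f : Fin m → Bool) : bseq a b f 0 = a :=
  Fin.cons_zero _ _

lemma bseq_cons_succ {m : ℕ} (a b c : Bool) (f : Fin m → Bool) (i : Fin (m + 2)) :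
    bseq a b (Fin.cons c f) i.succ = bseq c b f i := by
  unfold bseq
  rw [Fin.cons_succ, ← Fin.cons_snoc_eq_snoc_cons]

lemma wt_cons (τ : ℝ) {m : ℕ} (a b c : Bool) (f : Fin m → Bool) :
    wt τ a b (Fin.cons c f) = edgeF τ a c * wt τ c b f := by
  unfold wt
  rw [Fin.prod_univ_succ]
  congr 1
  · apply Finset.prod_congr rfl
    intro i _
    rw [← Fin.succ_castSucc, bseq_cons_succ, bseq_cons_succ]

noncomputable def T (τ : ℝ) (m : ℕ) (a b : Bool) : ℝ := ∑ f : Fin m → Bool, wt τ a b f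

lemma T_zero (τ : ℝ) (a b : Bool) : T τ 0 a b = edgeF τ a b := by
  rw [T, Fintype.sum_unique]
  unfold wt
  rw [Fin.prod_univ_one]
  rfl

lemma T_succ (τ : ℝ) (m : ℕ) (a b : Bool) :
    T τ (m + 1) a b = edgeF τ a true * T τ m true b + edgeF τ a false * T τ m false b := by
  rw [T, ← Equiv.sum_comp (Fin.consEquiv fun _ => Bool), Fintype.sum_prod_type]
  simp only [Fin.consEquiv, Equiv.coe_fn_mk]
  rw [Fintype.sum_bool (fun c => ∑ f : Fin m → Bool, wt τ a b (Fin.cons c f))]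
  simp only [wt_cons, ← Finset.mul_sum, T]

lemma T_closed (τ : ℝ) (m : ℕ) (a b : Bool) :
    T τ m a b = ((1 + τ) ^ (m + 1) + (if a = b then 1 else -1) * (1 - τ) ^ (m + 1)) / 2 := by
  induction m generalizing a with
  | zero => rw [T_zero]; cases a <;> cases b <;> simp [edgeF] <;> ring
  | succ m ih =>
    rw [T_succ, ih, ih]
    cases a <;> cases b <;> simp [edgeF] <;> ring



lemma mem_box (n : ℕ) (i : Fin (2 * n + 1)) :
    -(n : ℤ) + (i : ℕ) ∈ Finset.Icc (-(n : ℤ)) (n : ℤ) := by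
  have := i.isLt
  simp only [Finset.mem_Icc]
  omega

/-- The sequence of spins from `-n-1` to `n+1`, with left boundary spin `a`. -/
noncomputable def aspin {n : ℕ} (a : Bool) (σ : Config n) (y : ℤ) : ℝ :=
  if y = -(n : ℤ) - 1 then (if a then 1 else -1) else spin σ y

lemma step1 {n : ℕ} (a : Bool) (σ : Config n) (j : Fin (2 * n + 3)) :
    aspin a σ (-(n : ℤ) - 1 + (j : ℕ)) =
      (if bseq a true (fun i : Fin (2 * n + 1) => σ ⟨-(n : ℤ) + (i : ℕ), mem_box n i⟩) j
        then 1 else -1) := by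
  set f : Fin (2 * n + 1) → Bool := fun i => σ ⟨-(n : ℤ) + (i : ℕ), mem_box n i⟩ with hf
  induction j using Fin.cases with
  | zero =>
    rw [bseq_zero]
    simp [aspin]
  | succ k =>
    have hsk : bseq a true f k.succ = (Fin.snoc f true : Fin (2 * n + 2) → Bool) k := by
      unfold bseq; rw [Fin.cons_succ]
    rw [hsk]
    induction k using Fin.lastCases with
    | last =>
      rw [Fin.snoc_last]
      have hv : (((Fin.last (2 * n + 1)).succ : Fin (2 * n + 2 + 1)) : ℕ) = 2 * n + 2 := rfl
      rw [hv]
      have hy : -(n : ℤ) - 1 + ((2 * n + 2 : ℕ) : ℤ) = (n : ℤ) + 1 := by push_cast; ring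
      rw [hy]
      have hnot : ((n : ℤ) + 1) ∉ Finset.Icc (-(n : ℤ)) (n : ℤ)  := by
        simp only [Finset.mem_Icc]; omega
      rw [aspin, if_neg (show ¬((n : ℤ) + 1 = -(n : ℤ) - 1) by omega), spin, dif_neg hnot]
      simp
    | cast j' =>
      rw [Fin.snoc_castSucc]
      have hy : -(n : ℤ) - 1 + (((j'.castSucc.succ : Fin (2 * n + 3)) : ℕ) : ℤ)
          = -(n : ℤ) + ((j' : ℕ) : ℤ) := by
        have hv : ((j'.castSucc.succ : Fin (2 * n + 3)) : ℕ) = (j' : ℕ) + 1 := by simp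
        rw [hv]; push_cast; ring
      rw [hy]
      have hmem := mem_box n j'
      have hne : -(n : ℤ) + (j' : ℕ) ≠ -(n : ℤ) - 1 := by omega
      rw [aspin, if_neg hne, spin, dif_pos hmem, hf]

lemma step2 (I : ℝ) {n : ℕ} (a : Bool) (σ : Config n) :
    Hplus (fun _ => I) n σ + (if a then 0 else I * spin σ (-(n : ℤ))) =
      ∑ x ∈ Finset.Icc (-(n : ℤ)) ((n : ℤ) + 1),
        I * (if aspin a σ (x - 1) ≠ aspin a σ x then 1 else 0) := by
  have h1 : Finset.Icc (-(n : ℤ)) ((n : ℤ) + 1) =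
      insert (-(n : ℤ)) (Finset.Icc (-(n : ℤ) + 1) ((n : ℤ) + 1)) := by
    ext x; simp only [Finset.mem_Icc, Finset.mem_insert]; omega
  have h2 : Finset.Icc (-(n : ℤ) + 1) ((n : ℤ) + 1) =
      insert ((n : ℤ) + 1) (Finset.Icc (-(n : ℤ) + 1) (n : ℤ)) := by
    ext x; simp only [Finset.mem_Icc, Finset.mem_insert]; omega
  rw [h1, Finset.sum_insert (by simp only [Finset.mem_Icc]; omega),
    h2, Finset.sum_insert (by simp only [Finset.mem_Icc]; omega)]
  have hint : ∀ x ∈ Finset.Icc (-(n : ℤ) + 1) (n : ℤ),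
      I * (if aspin a σ (x - 1) ≠ aspin a σ x then 1 else 0) =
      I * (if spin σ (x - 1) ≠ spin σ x then 1 else 0) := by
    intro x hx
    simp only [Finset.mem_Icc] at hx
    rw [aspin, aspin, if_neg (show ¬(x - 1 = -(n : ℤ) - 1) by omega),
      if_neg (show ¬(x = -(n : ℤ) - 1) by omega)]
  rw [Finset.sum_congr rfl hint]
  -- remaining: boundary terms
  have hmem : -(n : ℤ) ∈ Finset.Icc (-(n : ℤ)) (n : ℤ) := by
    simp only [Finset.mem_Icc]; omega
  have hL : aspin a σ (-(n : ℤ) - 1) = (if a then 1 else -1) := by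
    rw [aspin, if_pos rfl]
  have hRoff : aspin a σ ((n : ℤ) + 1) = 1 := by
    rw [aspin, if_neg (by omega), spin, dif_neg (by simp only [Finset.mem_Icc]; omega)]
  have hRn : aspin a σ (n : ℤ) = spin σ (n : ℤ) := by
    rw [aspin, if_neg (by omega)]
  have hLn : aspin a σ (-(n : ℤ)) = spin σ (-(n : ℤ)) := by
    rw [aspin, if_neg (by omega)]
  have hspin : spin σ (-(n : ℤ)) = (if σ ⟨-(n : ℤ), hmem⟩ then 1 else -1) := by
    rw [spin, dif_pos hmem]
  rw [Hplus]
  rw [show ((n : ℤ) + 1 - 1) = (n : ℤ) from by ring]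
  rw [hL, hLn, hRoff, hRn, hspin]
  cases a <;> rcases hb : σ ⟨-(n : ℤ), hmem⟩ <;> norm_num [hb] <;> ring

lemma exp_H (β I : ℝ) {n : ℕ} (σ : Config n) (a : Bool) :
    Real.exp (-β * (Hplus (fun _ => I) n σ + (if a then 0 else I * spin σ (-(n : ℤ))))) =
      wt (Real.exp (-β * I)) a true
        (fun i : Fin (2 * n + 1) => σ ⟨-(n : ℤ) + (i : ℕ), mem_box n i⟩) := by
  rw [step2 I a σ, Finset.mul_sum, Real.exp_sum]
  have hmap : Finset.Icc (-(n : ℤ)) ((n : ℤ) + 1)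
      = (Finset.range (2 * n + 2)).map
          ⟨fun i : ℕ => -(n : ℤ) + i, show Function.Injective (fun i : ℕ => -(n : ℤ) + i) from fun i j h => by simpa using h⟩ := by
    ext x
    simp only [Finset.mem_Icc, Finset.mem_map, Finset.mem_range, Function.Embedding.coeFn_mk]
    constructor
    · intro hx; exact ⟨(x + n).toNat, by omega, by omega⟩
    · rintro ⟨i, hi, rfl⟩; omega
  rw [hmap, Finset.prod_map]
  simp only [Function.Embedding.coeFn_mk]
  rw [← Fin.prod_univ_eq_prod_range (fun i : ℕ => Real.exp
      (-β * (I * (if aspin a σ ((-(n : ℤ) + i) - 1) ≠ aspin a σ (-(n : ℤ) + i)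
        then 1 else 0)))) (2 * n + 2)]
  unfold wt
  apply Finset.prod_congr rfl
  intro i _
  have hc : (-(n : ℤ) + ((i : ℕ) : ℤ)) - 1
      = -(n : ℤ) - 1 + (((i.castSucc : Fin (2 * n + 3)) : ℕ) : ℤ) := by
    simp only [Fin.coe_castSucc]; ring
  have hs : (-(n : ℤ) + ((i : ℕ) : ℤ))
      = -(n : ℤ) - 1 + (((i.succ : Fin (2 * n + 3)) : ℕ) : ℤ) := by
    simp only [Fin.val_succ]; push_cast; ring
  rw [hc, hs, step1, step1]
  rcases h1 : bseq a true (fun i : Fin (2 * n + 1) => σ ⟨-(n : ℤ) + (i : ℕ), mem_box n i⟩)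
      i.castSucc <;>
    rcases h2 : bseq a true (fun i : Fin (2 * n + 1) => σ ⟨-(n : ℤ) + (i : ℕ), mem_box n i⟩)
      i.succ <;>
    norm_num [edgeF]

def configEquiv (n : ℕ) : Config n ≃ (Fin (2 * n + 1) → Bool) where
  toFun σ := fun i => σ ⟨-(n : ℤ) + (i : ℕ), mem_box n i⟩
  invFun g := fun x => g ⟨(x.1 + n).toNat, by
    have := x.2; simp only [Finset.mem_Icc] at this; omega⟩
  left_inv σ := by
    funext x
    dsimp only
    congr 1
    apply Subtype.ext
    have := x.2; simp only [Finset.mem_Icc] at this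
    show -(n : ℤ) + ((x.1 + n).toNat : ℤ) = x.1
    omega
  right_inv g := by
    funext i
    dsimp only
    congr 1
    apply Fin.ext
    show (-(n : ℤ) + (i : ℕ) + n).toNat = (i : ℕ)
    omega

/-- For the Ising model (`I_x = I` for all `x`), with `τ = e^{-βI}`, the
partition functions have the closed form
`Z_n^+ = ((1+τ)^{2(n+1)} + (1-τ)^{2(n+1)})/2` and
`Z_n^± = ((1+τ)^{2(n+1)} - (1-τ)^{2(n+1)})/2`. -/
theorem stmt_4 (β I : ℝ) (hβ : 0 < β) (n : ℕ) :
    Zplus β (fun _ => I) n = (1 / 2) *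
        ((1 + Real.exp (-β * I)) ^ (2 * (n + 1)) + (1 - Real.exp (-β * I)) ^ (2 * (n + 1))) ∧
    Zpm β (fun _ => I) n = (1 / 2) *
        ((1 + Real.exp (-β * I)) ^ (2 * (n + 1)) - (1 - Real.exp (-β * I)) ^ (2 * (n + 1))) := by
  have key : ∀ a : Bool,
      (∑ σ : Config n, Real.exp (-β * (Hplus (fun _ => I) n σ +
        (if a then 0 else I * spin σ (-(n : ℤ)))))) =
      (1 / 2) * ((1 + Real.exp (-β * I)) ^ (2 * (n + 1)) +
        (if a then 1 else -1) * (1 - Real.exp (-β * I)) ^ (2 * (n + 1))) := by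
    intro a
    have h1 : (∑ σ : Config n, Real.exp (-β * (Hplus (fun _ => I) n σ +
        (if a then 0 else I * spin σ (-(n : ℤ)))))) =
        T (Real.exp (-β * I)) (2 * n + 1) a true := by
      rw [T]
      exact Fintype.sum_equiv (configEquiv n) _ _ (fun σ => exp_H β I σ a)
    rw [h1, T_closed, show 2 * (n + 1) = 2 * n + 1 + 1 from by ring]
    cases a <;> norm_num <;> ring
  constructor
  · have h := key true
    simp only [if_pos, add_zero, one_mul] at h
    rw [Zplus]
    simpa using h
  · have h := key false
    rw [Zpm]
    have hH : ∀ σ : Config n, Hpm (fun _ => I) n σ = Hplus (fun _ => I) n σ +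
        (if (false : Bool) then 0 else I * spin σ (-(n : ℤ))) := by
      intro σ; rw [Hpm]; simp
    simp only [hH]
    rw [h]
    norm_num
    ring
end

section
/- Let β > 0 and let (I_x)_{x∈ℤ} satisfy the symmetry condition I_n = I_{−n+1} for all n ∈ ℤ and be periodic, i.e. I_{m+p} = I_m for some period p ≥ 1 and all m ∈ ℤ. Then Z_n^± > 0 for every n ∈ ℕ and the ratio Z_n^+ / Z_n^± converges to 1 as n → ∞. -/
open Finset

noncomputable def sg (b : Bool) : ℝ := if b then 1 else -1

def extb (m : ℕ) (b₀ b₁ : Bool) (s : Fin m → Bool) : ℕ → Bool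
  | 0 => b₀
  | k+1 => if h : k < m then s ⟨k, h⟩ else b₁

@[simp] lemma extb_zero (m : ℕ) (b₀ b₁ : Bool) (s : Fin m → Bool) :
    extb m b₀ b₁ s 0 = b₀ := rfl

lemma extb_succ (m : ℕ) (b₀ b₁ : Bool) (s : Fin m → Bool) (k : ℕ) (h : k < m) :
    extb m b₀ b₁ s (k+1) = s ⟨k, h⟩ := dif_pos h

lemma extb_top (m : ℕ) (b₀ b₁ : Bool) (s : Fin m → Bool) (k : ℕ) (h : ¬ k < m) :
    extb m b₀ b₁ s (k+1) = b₁ := dif_neg h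

noncomputable def Z' (β : ℝ) (J : ℕ → ℝ) (m : ℕ) (b₀ b₁ : Bool) : ℝ :=
  ∑ s : Fin m → Bool,
    Real.exp (-β * ∑ k ∈ range (m+1),
      J k * (if extb m b₀ b₁ s k = extb m b₀ b₁ s (k+1) then 0 else 1))

lemma ext_cons_succ (m : ℕ) (b₀ b₁ a : Bool) (t : Fin m → Bool) (k : ℕ) :
    extb (m+1) b₀ b₁ (Fin.cons a t) (k+1) = extb m a b₁ t k := by
  match k with
  | 0 =>
    rw [extb_succ _ _ _ _ _ (by omega), extb_zero]
    simp [Fin.cons_zero]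
  | j+1 =>
    by_cases h : j < m
    · rw [extb_succ _ _ _ _ _ (by omega), extb_succ _ _ _ _ _ h]
      exact Fin.cons_succ (α := fun _ => Bool) a t ⟨j, h⟩
    · rw [extb_top _ _ _ _ _ (by omega), extb_top _ _ _ _ _ h]

lemma Z'_closed (β : ℝ) : ∀ (m : ℕ) (J : ℕ → ℝ) (b₀ b₁ : Bool),
    Z' β J m b₀ b₁ =
      ((∏ k ∈ range (m+1), (1 + Real.exp (-β * J k)))
        + sg b₀ * sg b₁ * ∏ k ∈ range (m+1), (1 - Real.exp (-β * J k))) / 2 := by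
  intro m
  induction m with
  | zero =>
    intro J b₀ b₁
    rw [Z', Fintype.sum_unique]
    have h1 : ∀ s : Fin 0 → Bool, extb 0 b₀ b₁ s (0+1) = b₁ := fun s => extb_top _ _ _ _ _ (by omega)
    rw [Finset.sum_range_one, extb_zero, h1, Finset.prod_range_one, Finset.prod_range_one]
    cases b₀ <;> cases b₁ <;>
      simp [sg, mul_zero, mul_one, Real.exp_zero] <;> ring
  | succ m ih =>
    intro J b₀ b₁
    have hbij : Function.Bijective (fun p : Bool × (Fin m → Bool) => (Fin.cons p.1 p.2 : Fin (m+1) → Bool)) :=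
      (Fin.consEquiv (fun _ => Bool)).bijective
    rw [Z', ← Fintype.sum_bijective _ hbij (fun p : Bool × (Fin m → Bool) =>
        Real.exp (-β * ∑ k ∈ range (m+1+1),
          J k * (if extb (m+1) b₀ b₁ (Fin.cons p.1 p.2) k
              = extb (m+1) b₀ b₁ (Fin.cons p.1 p.2) (k+1) then 0 else 1)))
        _ (fun p => rfl)]
    rw [Fintype.sum_prod_type]
    have key : ∀ (a : Bool) (t : Fin m → Bool),
        Real.exp (-β * ∑ k ∈ range (m+1+1),
          J k * (if extb (m+1) b₀ b₁ (Fin.cons a t) k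
              = extb (m+1) b₀ b₁ (Fin.cons a t) (k+1) then 0 else 1))
        = Real.exp (-β * (J 0 * (if b₀ = a then 0 else 1)))
          * Real.exp (-β * ∑ k ∈ range (m+1),
            J (k+1) * (if extb m a b₁ t k = extb m a b₁ t (k+1) then 0 else 1)) := by
      intro a t
      rw [← Real.exp_add, ← mul_add]
      congr 1
      rw [Finset.sum_range_succ' (fun k => J k *
        (if extb (m+1) b₀ b₁ (Fin.cons a t) k = extb (m+1) b₀ b₁ (Fin.cons a t) (k+1) then 0 else 1)) (m+1),
        add_comm]
      simp only [ext_cons_succ, extb_zero]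
    calc (∑ a : Bool, ∑ t : Fin m → Bool,
        Real.exp (-β * ∑ k ∈ range (m+1+1),
          J k * (if extb (m+1) b₀ b₁ (Fin.cons a t) k
              = extb (m+1) b₀ b₁ (Fin.cons a t) (k+1) then 0 else 1)))
        = ∑ a : Bool, Real.exp (-β * (J 0 * (if b₀ = a then 0 else 1)))
            * Z' β (fun k => J (k+1)) m a b₁ := by
          apply Finset.sum_congr rfl
          intro a _
          rw [Z', Finset.mul_sum]
          exact Finset.sum_congr rfl fun t _ => key a t
      _ = _ := by
          rw [Fintype.sum_bool]
          rw [ih _ true b₁, ih _ false b₁]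
          rw [Finset.prod_range_succ' (fun k => 1 + Real.exp (-β * J k)) (m+1),
            Finset.prod_range_succ' (fun k => 1 - Real.exp (-β * J k)) (m+1)]
          cases b₀ <;> cases b₁ <;>
            simp [sg, mul_zero, mul_one, Real.exp_zero] <;> ring

def toConfig (n : ℕ) (s : Fin (2*n+1) → Bool) : Config n :=
  fun x => s ⟨(x.1 + n).toNat, by
    have := x.2; simp only [Finset.mem_Icc] at this; omega⟩

lemma toConfig_bijective (n : ℕ) : Function.Bijective (toConfig n) := by
  constructor
  · intro s t h
    funext k
    have := congrFun h ⟨(k : ℤ) - n, by simp only [Finset.mem_Icc]; omega⟩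
    simpa [toConfig, show ((k:ℤ) - n + n).toNat = (k : ℕ) by omega] using this
  · intro σ
    refine ⟨fun k => σ ⟨(k : ℤ) - n, by simp only [Finset.mem_Icc]; omega⟩, ?_⟩
    funext x
    have hx := x.2
    simp only [Finset.mem_Icc] at hx
    show σ ⟨((x.1 + n).toNat : ℤ) - n, _⟩ = σ x
    apply congrArg
    apply Subtype.ext
    show ((x.1 + n).toNat : ℤ) - n = x.1
    omega

lemma spin_toConfig (n : ℕ) (s : Fin (2*n+1) → Bool) (x : ℤ)
    (h : x ∈ Finset.Icc (-(n : ℤ)) (n : ℤ)) (k : ℕ) (hk : k < 2*n+1)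
    (hxk : x = -(n:ℤ) + k) :
    spin (toConfig n s) x = sg (s ⟨k, hk⟩) := by
  have hval : toConfig n s ⟨x, h⟩ = s ⟨k, hk⟩ := by
    show s _ = s _
    apply congrArg
    apply Fin.ext
    show ((x + (n:ℤ)).toNat) = k
    omega
  rw [spin, dif_pos h, hval, sg]

lemma sg_one : (1 : ℝ) = sg true := by simp [sg]

lemma chi_sg (a b : Bool) : (if sg a ≠ sg b then (1:ℝ) else 0) = (if a = b then 0 else 1) := by
  cases a <;> cases b <;> norm_num [sg]

lemma H_eq (I : ℤ → ℝ) (n : ℕ) (b₀ : Bool) (s : Fin (2*n+1) → Bool) :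
    Hplus I n (toConfig n s)
      + (if b₀ then (0:ℝ) else I (-(n:ℤ)) * spin (toConfig n s) (-(n:ℤ)))
    = ∑ k ∈ range (2*n+1+1), I (-(n:ℤ) + (k:ℤ)) *
        (if extb (2*n+1) b₀ true s k = extb (2*n+1) b₀ true s (k+1) then 0 else 1) := by
  have hz : (0:ℕ) < 2*n+1 := by omega
  have h2n : 2*n < 2*n+1 := by omega
  have hs0 : spin (toConfig n s) (-(n:ℤ)) = sg (s ⟨0, hz⟩) :=
    spin_toConfig n s _ (by simp only [Finset.mem_Icc]; omega) 0 hz (by push_cast; ring)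
  have hsn : spin (toConfig n s) (n:ℤ) = sg (s ⟨2*n, h2n⟩) :=
    spin_toConfig n s _ (by simp only [Finset.mem_Icc]; omega) (2*n) h2n (by push_cast; omega)
  have e0 : -(n:ℤ) + ((0:ℕ):ℤ) = -(n:ℤ) := by push_cast; ring
  have eC : -(n:ℤ) + ((2*n+1:ℕ):ℤ) = (n:ℤ) + 1 := by push_cast; ring
  rw [Finset.sum_range_succ, Finset.sum_range_succ']
  rw [Hplus]
  have hmid : ∑ x ∈ Finset.Icc (-(n : ℤ) + 1) (n : ℤ),
      I x * (if spin (toConfig n s) (x - 1) ≠ spin (toConfig n s) x then (1:ℝ) else 0)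
      = ∑ k ∈ range (2*n), I (-(n:ℤ) + ((k+1 : ℕ):ℤ)) *
          (if extb (2*n+1) b₀ true s (k+1) = extb (2*n+1) b₀ true s (k+1+1) then 0 else 1) := by
    refine Finset.sum_nbij' (fun x => (x + n - 1).toNat) (fun k => -(n:ℤ) + (k+1)) ?_ ?_ ?_ ?_ ?_
    · intro a ha; simp only [Finset.mem_Icc] at ha; simp only [Finset.mem_range]; omega
    · intro a ha; simp only [Finset.mem_range] at ha; simp only [Finset.mem_Icc]; push_cast; omega
    · intro a ha; simp only [Finset.mem_Icc] at ha; push_cast; omega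
    · intro a ha; simp only [Finset.mem_range] at ha; push_cast; omega
    · intro x hx
      simp only [Finset.mem_Icc] at hx
      have hk1 : (x + n - 1).toNat < 2*n+1 := by omega
      have hk2 : (x + n - 1).toNat + 1 < 2*n+1 := by omega
      have h1 : spin (toConfig n s) (x-1) = sg (s ⟨(x + n - 1).toNat, hk1⟩) :=
        spin_toConfig n s _ (by simp only [Finset.mem_Icc]; omega) _ hk1 (by push_cast; omega)
      have h2 : spin (toConfig n s) x = sg (s ⟨(x + n - 1).toNat + 1, hk2⟩) :=
        spin_toConfig n s _ (by simp only [Finset.mem_Icc]; omega) _ hk2 (by push_cast; omega)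
      rw [h1, h2, chi_sg]
      rw [extb_succ _ _ _ _ _ hk1, extb_succ _ _ _ _ _ hk2]
      congr 1
      exact congrArg I (by push_cast; omega)
  have hf0 : I (-(n:ℤ)) * (if spin (toConfig n s) (-(n:ℤ)) ≠ 1 then (1:ℝ) else 0)
        + (if b₀ then (0:ℝ) else I (-(n:ℤ)) * spin (toConfig n s) (-(n:ℤ)))
      = I (-(n:ℤ) + ((0:ℕ):ℤ)) *
          (if extb (2*n+1) b₀ true s 0 = extb (2*n+1) b₀ true s (0+1) then (0:ℝ) else 1) := by
    rw [hs0, extb_zero, extb_succ _ _ _ _ _ hz, e0]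
    cases b₀ <;> cases s ⟨0, hz⟩ <;> norm_num [sg]
  have hfC : I ((n:ℤ) + 1) * (if spin (toConfig n s) (n:ℤ) ≠ 1 then (1:ℝ) else 0)
      = I (-(n:ℤ) + ((2*n+1:ℕ):ℤ)) *
          (if extb (2*n+1) b₀ true s (2*n+1) = extb (2*n+1) b₀ true s (2*n+1+1) then (0:ℝ) else 1) := by
    rw [hsn, extb_succ _ _ _ _ _ h2n, extb_top _ _ _ _ _ (by omega), eC]
    cases s ⟨2*n, h2n⟩ <;> norm_num [sg]
  rw [hmid, ← hf0, ← hfC]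
  ring

noncomputable def Pn (β : ℝ) (I : ℤ → ℝ) (n : ℕ) : ℝ :=
  ∏ k ∈ range (2*n+1+1), (1 + Real.exp (-β * I (-(n:ℤ) + (k:ℤ))))

noncomputable def Qn (β : ℝ) (I : ℤ → ℝ) (n : ℕ) : ℝ :=
  ∏ k ∈ range (2*n+1+1), (1 - Real.exp (-β * I (-(n:ℤ) + (k:ℤ))))

lemma Zplus_closed (β : ℝ) (I : ℤ → ℝ) (n : ℕ) :
    Zplus β I n = (Pn β I n + Qn β I n) / 2 := by
  have h : Zplus β I n = Z' β (fun k => I (-(n:ℤ) + (k:ℤ))) (2*n+1) true true := by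
    rw [Zplus, Z']
    refine (Fintype.sum_bijective (toConfig n) (toConfig_bijective n) _ _ fun s => ?_).symm
    congr 1
    rw [← H_eq I n true s]
    simp
  rw [h, Z'_closed]
  simp only [sg, if_true, one_mul, Pn, Qn]

lemma Zpm_closed (β : ℝ) (I : ℤ → ℝ) (n : ℕ) :
    Zpm β I n = (Pn β I n - Qn β I n) / 2 := by
  have h : Zpm β I n = Z' β (fun k => I (-(n:ℤ) + (k:ℤ))) (2*n+1) false true := by
    rw [Zpm, Z']
    refine (Fintype.sum_bijective (toConfig n) (toConfig_bijective n) _ _ fun s => ?_).symm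
    congr 1
    rw [← H_eq I n false s]
    simp [Hpm]
  rw [h, Z'_closed]
  simp only [sg, Pn, Qn, Bool.false_eq_true, if_false, if_true]
  ring

noncomputable def tv (β J : ℝ) : ℝ :=
  |1 - Real.exp (-β * J)| / (1 + Real.exp (-β * J))

lemma tv_nonneg (β J : ℝ) : 0 ≤ tv β J :=
  div_nonneg (abs_nonneg _) (by positivity)

lemma tv_lt_one (β J : ℝ) : tv β J < 1 := by
  rw [tv, div_lt_one (by positivity)]
  have h := Real.exp_pos (-β * J)
  rw [abs_lt]
  constructor <;> nlinarith

lemma abs_one_sub_exp (β J : ℝ) :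
    |1 - Real.exp (-β * J)| = tv β J * (1 + Real.exp (-β * J)) := by
  rw [tv, div_mul_cancel₀]
  positivity


/-- If the interactions satisfy the symmetry condition `I_n = I_{-n+1}` and are
periodic with some period `p ≥ 1`, then `Z_n^± > 0` for all `n` and the ratio
`Z_n^+/Z_n^±` tends to `1` as `n → ∞`. -/
theorem stmt_6 (β : ℝ) (hβ : 0 < β) (I : ℤ → ℝ)
    (hsym : ∀ n : ℤ, I n = I (-n + 1))
    (p : ℕ) (hp : 1 ≤ p) (hper : ∀ m : ℤ, I (m + (p : ℤ)) = I m) :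
    (∀ n : ℕ, 0 < Zpm β I n) ∧
    Filter.Tendsto (fun n : ℕ => Zplus β I n / Zpm β I n)
      Filter.atTop (nhds 1) := by
  have hmul : ∀ (k m : ℤ), I (m + k * p) = I m := by
    intro k
    induction k using Int.induction_on with
    | zero => intro m; simp
    | succ k ih =>
      intro m
      rw [show m + ((k:ℤ)+1) * p = (m + (k:ℤ) * p) + p by ring, hper, ih]
    | pred k ih =>
      intro m
      have h1 := hper (m + (-(k:ℤ)-1) * p)
      rw [show m + (-(k:ℤ)-1) * p + (p:ℤ) = m + (-(k:ℤ)) * p by ring] at h1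
      rw [← h1, ih]
  have hpZ : (0:ℤ) < (p:ℤ) := by exact_mod_cast hp
  have hrange : (range p).Nonempty := Finset.nonempty_range_iff.mpr (by omega)
  set M : ℝ := (range p).sup' hrange (fun k => tv β (I k)) with hM
  have hM1 : M < 1 := (Finset.sup'_lt_iff hrange).mpr fun k _ => tv_lt_one β (I k)
  have h00 : (0:ℕ) ∈ range p := Finset.mem_range.mpr (by omega)
  have hM0 : 0 ≤ M := le_trans (tv_nonneg β (I ((0:ℕ):ℤ)))
    (Finset.le_sup' (fun k : ℕ => tv β (I k)) h00)
  have hMx : ∀ x : ℤ, tv β (I x) ≤ M := by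
    intro x
    have h0 : (0:ℤ) ≤ x % p := Int.emod_nonneg x (by omega)
    have h1 : x % p < p := Int.emod_lt_of_pos x hpZ
    have hIx : I x = I (((x % (p:ℤ)).toNat : ℕ) : ℤ) := by
      rw [show (((x % (p:ℤ)).toNat : ℕ) : ℤ) = x % p by omega]
      conv_lhs => rw [show x = x % p + (x / p) * p by
        rw [mul_comm]; exact (Int.emod_add_mul_ediv x p).symm]
      exact hmul _ _
    rw [hIx]
    have hb : (x % (p:ℤ)).toNat ∈ range p := Finset.mem_range.mpr (by omega)
    exact Finset.le_sup' (fun k : ℕ => tv β (I k)) hb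
  have hPpos : ∀ n : ℕ, 0 < Pn β I n := fun n =>
    Finset.prod_pos fun k _ => by positivity
  have hQbound : ∀ n : ℕ, |Qn β I n| ≤ M ^ (2*n+1+1) * Pn β I n := by
    intro n
    rw [Qn, Finset.abs_prod]
    calc ∏ k ∈ range (2*n+1+1), |1 - Real.exp (-β * I (-(n:ℤ) + (k:ℤ)))|
        ≤ ∏ k ∈ range (2*n+1+1), M * (1 + Real.exp (-β * I (-(n:ℤ) + (k:ℤ)))) := by
          refine Finset.prod_le_prod (fun k _ => abs_nonneg _) (fun k _ => ?_)
          rw [abs_one_sub_exp]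
          exact mul_le_mul_of_nonneg_right (hMx _) (by positivity)
      _ = M ^ (2*n+1+1) * Pn β I n := by
          rw [Finset.prod_mul_distrib, Finset.prod_const, Finset.card_range, Pn]
  have hQltP : ∀ n : ℕ, |Qn β I n| < Pn β I n := by
    intro n
    refine lt_of_le_of_lt (hQbound n) ?_
    have h : M ^ (2*n+1+1) < 1 := pow_lt_one₀ hM0 hM1 (by omega)
    nlinarith [hPpos n]
  have hpos : ∀ n : ℕ, 0 < Zpm β I n := by
    intro n
    rw [Zpm_closed]
    have h2 := abs_lt.mp (hQltP n)
    linarith [h2.1, h2.2]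
  refine ⟨hpos, ?_⟩
  have hrtend : Filter.Tendsto (fun n : ℕ => Qn β I n / Pn β I n) Filter.atTop (nhds 0) := by
    have hg : Filter.Tendsto (fun n : ℕ => M ^ (2*n+1+1)) Filter.atTop (nhds 0) := by
      have h1 : Filter.Tendsto (fun k : ℕ => M ^ k) Filter.atTop (nhds 0) :=
        tendsto_pow_atTop_nhds_zero_of_lt_one hM0 hM1
      have h2 : Filter.Tendsto (fun n : ℕ => 2*n+1+1) Filter.atTop Filter.atTop :=
        Filter.tendsto_atTop_mono (fun n => by simp only [id_eq]; omega) Filter.tendsto_id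
      exact h1.comp h2
    apply squeeze_zero_norm _ hg
    intro n
    rw [Real.norm_eq_abs, abs_div, abs_of_pos (hPpos n), div_le_iff₀ (hPpos n)]
    exact hQbound n
  have h1 : Filter.Tendsto (fun n : ℕ => 1 + Qn β I n / Pn β I n) Filter.atTop (nhds 1) := by
    have := Filter.Tendsto.const_add (1:ℝ) hrtend
    simpa using this
  have h2 : Filter.Tendsto (fun n : ℕ => 1 - Qn β I n / Pn β I n) Filter.atTop (nhds 1) := by
    have := Filter.Tendsto.const_sub (1:ℝ) hrtend
    simpa using this
  have h3 : Filter.Tendsto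
      (fun n : ℕ => (1 + Qn β I n / Pn β I n) / (1 - Qn β I n / Pn β I n))
      Filter.atTop (nhds 1) := by
    have := h1.div h2 one_ne_zero
    simpa only [div_one, Pi.div_def] using this
  refine h3.congr fun n => ?_
  have hP := hPpos n
  have habs := abs_lt.mp (hQltP n)
  rw [Zplus_closed, Zpm_closed]
  have hPn : Pn β I n ≠ 0 := ne_of_gt hP
  have hd : Pn β I n - Qn β I n ≠ 0 := by linarith [habs.1, habs.2]
  have hr1 : (1:ℝ) - Qn β I n / Pn β I n ≠ 0 := by
    have : Qn β I n / Pn β I n < 1 :=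
      (div_lt_one hP).mpr (lt_of_le_of_lt (le_abs_self _) (hQltP n))
    linarith
  field_simp
end
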